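/- There is a universal constant c > 0 such that for every finite metric space (X,d) with at least two points, every chaining functional h of log-concave type, and every probability measure ρ on X, there exists a chaining tree C for (X,d) with val_h(C) ≤ c·max_{x∈X} ∫₀^∞ h(ρ(B(x,r))) dr (the right-hand side being interpreted as +∞ if some ball of positive radius has ρ-measure zero). -/

import Mathlib

open MeasureTheory

noncomputable section

/-- `f` is log-concave on `[0,∞)`. -/
def IsLogConcaveOn (f : ℝ → ℝ) : Prop :=
  ∀ x ∈ Set.Ici (0:ℝ), ∀ y ∈ Set.Ici (0:ℝ), ∀ t ∈ Set.Icc (0:ℝ) 1,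
    f x ^ t * f y ^ (1 - t) ≤ f (t * x + (1 - t) * y)

/-- `f` is a continuous, non-increasing, log-concave probability density on `[0,∞)`
normalized so that `f 0 = 1`. -/
structure IsChainingDensity (f : ℝ → ℝ) : Prop where
  nonneg : ∀ t : ℝ, 0 ≤ t → 0 ≤ f t
  continuousOn : ContinuousOn f (Set.Ici 0)
  antitoneOn : AntitoneOn f (Set.Ici 0)
  logConcave : IsLogConcaveOn f
  total : (∫ t in Set.Ioi (0:ℝ), f t) = 1
  normalized : f 0 = 1

/-- The complementary cumulative distribution function `F(s) = ∫_s^∞ f(t) dt`. -/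
def ccdf (f : ℝ → ℝ) (s : ℝ) : ℝ := ∫ t in Set.Ioi s, f t

/-- The chaining functional `h(p) = F⁻¹(p)`, defined on `(0,1]` as the least
`s ≥ 0` with `F(s) ≤ p`. -/
def chainFn (f : ℝ → ℝ) (p : ℝ) : ℝ := sInf {s : ℝ | 0 ≤ s ∧ ccdf f s ≤ p}

open scoped ENNReal

/-- The extended (`[0,∞]`-valued) chaining functional: `h(p)` is the least `s ≥ 0`
with `F(s) ≤ p`, and `+∞` when no such `s` exists (in particular
`h(0) = lim_{p→0⁺} h(p) ∈ (0,∞]`). -/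
def chainFnE (f : ℝ → ℝ) (p : ℝ) : ℝ≥0∞ :=
  sInf {t : ℝ≥0∞ | ∃ s : ℝ, 0 ≤ s ∧ ccdf f s ≤ p ∧ t = ENNReal.ofReal s}

/-- A probability measure on a finite set, given by its point masses. -/
def IsProbOn {X : Type*} [Fintype X] (μ : X → ℝ) : Prop :=
  (∀ x, 0 ≤ μ x) ∧ (∑ x, μ x) = 1

/-- The mass `μ(B(x,r))` of the closed ball of radius `r` around `x`. -/
def ballMass {X : Type*} [MetricSpace X] [Fintype X] (μ : X → ℝ) (x : X) (r : ℝ) : ℝ :=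
  ∑ y ∈ Finset.univ.filter (fun y => dist x y ≤ r), μ y

/-- `∫₀^∞ h(μ(B(x,r))) dr`, valued in `[0,∞]`. -/
def Hint {X : Type*} [MetricSpace X] [Fintype X] (f : ℝ → ℝ) (μ : X → ℝ) (x : X) : ℝ≥0∞ :=
  ∫⁻ r in Set.Ioi (0:ℝ), chainFnE f (ballMass μ x r)

/-- The diameter of the finite metric space `X`. -/
def fdiam (X : Type*) [MetricSpace X] : ℝ := Metric.diam (Set.univ : Set X)

/-- The sum of the edge labels of a rooted spanning tree described by a parent
function (one edge per non-root vertex). -/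
def edgeLabelSum {X : Type*} [Fintype X] (root : X) (prob : X → ℝ) : ℝ :=
  letI := Classical.decEq X
  ∑ x ∈ Finset.univ.erase root, prob x

/-- A chaining tree on the finite metric space `X`: a rooted spanning tree on `X`
(described by a parent function), together with probability labels
`p_e ∈ (0,1/2]` on the edges `e = {x, parent x}` (`x ≠ root`) summing to at most
`1/2`. -/
structure ChainingTree (X : Type*) [MetricSpace X] [Fintype X] where
  root : X
  parent : X → X
  prob : X → ℝ
  parent_root : parent root = root
  reaches_root : ∀ x : X, ∃ n : ℕ, parent^[n] x = root
  prob_mem : ∀ x : X, x ≠ root → prob x ∈ Set.Ioc (0:ℝ) (1/2)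
  prob_sum : edgeLabelSum root prob ≤ 1/2

/-- The length `l_e = d(u,v)·h(p_e)` of the parent edge at `x` (zero at the root). -/
def edgeLen {X : Type*} [MetricSpace X] [Fintype X] (f : ℝ → ℝ)
    (C : ChainingTree X) (x : X) : ℝ :=
  dist x (C.parent x) * chainFn f (C.prob x)

/-- The total length `Σ_{e ∈ P_x} l_e` of the path from `x` to the root (the path
reaches the root within `|X|` steps, and the root's term is `0`). -/
def pathLen {X : Type*} [MetricSpace X] [Fintype X] (f : ℝ → ℝ)
    (C : ChainingTree X) (x : X) : ℝ :=
  ∑ n ∈ Finset.range (Fintype.card X), edgeLen f C (C.parent^[n] x)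

/-- The value `val_h(C) = max_{x∈X} Σ_{e ∈ P_x} l_e` of a chaining tree. -/
def ctVal {X : Type*} [MetricSpace X] [Fintype X] (f : ℝ → ℝ)
    (C : ChainingTree X) : ℝ :=
  ⨆ x : X, pathLen f C x

namespace CT


variable {f : ℝ → ℝ}

theorem f_le_one (hf : IsChainingDensity f) {t : ℝ} (ht : 0 ≤ t) : f t ≤ 1 := by
  have := hf.antitoneOn (Set.self_mem_Ici) ht ht
  rwa [hf.normalized] at this

theorem integrableOn_f (hf : IsChainingDensity f) : IntegrableOn f (Set.Ioi (0:ℝ)) := by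
  by_contra h
  have := hf.total
  rw [MeasureTheory.integral_undef h] at this
  norm_num at this

theorem integrableOn_f' (hf : IsChainingDensity f) {s : ℝ} (hs : 0 ≤ s) :
    IntegrableOn f (Set.Ioi s) := (integrableOn_f hf).mono_set (Set.Ioi_subset_Ioi hs)

theorem integrableOn_f_Ioc (hf : IsChainingDensity f) {s t : ℝ} (hs : 0 ≤ s) :
    IntegrableOn f (Set.Ioc s t) :=
  (integrableOn_f' hf hs).mono_set Set.Ioc_subset_Ioi_self

theorem ccdf_nonneg (hf : IsChainingDensity f) {s : ℝ} (hs : 0 ≤ s) : 0 ≤ ccdf f s := by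
  apply MeasureTheory.setIntegral_nonneg measurableSet_Ioi
  intro x hx
  exact hf.nonneg x (le_of_lt (lt_of_le_of_lt hs hx))

theorem ccdf_zero (hf : IsChainingDensity f) : ccdf f 0 = 1 := hf.total

theorem ccdf_split (hf : IsChainingDensity f) {s t : ℝ} (hs : 0 ≤ s) (hst : s ≤ t) :
    ccdf f s = (∫ x in Set.Ioc s t, f x) + ccdf f t := by
  unfold ccdf
  rw [← Set.Ioc_union_Ioi_eq_Ioi hst,
    MeasureTheory.setIntegral_union (Set.Ioc_disjoint_Ioi le_rfl) measurableSet_Ioi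
      (integrableOn_f_Ioc hf hs) (integrableOn_f' hf (hs.trans hst))]

theorem ccdf_anti (hf : IsChainingDensity f) {s t : ℝ} (hs : 0 ≤ s) (hst : s ≤ t) :
    ccdf f t ≤ ccdf f s := by
  rw [ccdf_split hf hs hst]
  have : 0 ≤ ∫ x in Set.Ioc s t, f x := by
    apply MeasureTheory.setIntegral_nonneg measurableSet_Ioc
    intro x hx
    exact hf.nonneg x (hs.trans hx.1.le)
  linarith

theorem ccdf_le_one (hf : IsChainingDensity f) {s : ℝ} (hs : 0 ≤ s) : ccdf f s ≤ 1 := by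
  have := ccdf_anti hf le_rfl hs
  rwa [ccdf_zero hf] at this

theorem ccdf_lip (hf : IsChainingDensity f) {s t : ℝ} (hs : 0 ≤ s) (hst : s ≤ t) :
    ccdf f s - ccdf f t ≤ t - s := by
  rw [ccdf_split hf hs hst]
  have h1 : (∫ x in Set.Ioc s t, f x) ≤ ∫ x in Set.Ioc s t, (1:ℝ) := by
    apply MeasureTheory.setIntegral_mono_on (integrableOn_f_Ioc hf hs)
      (MeasureTheory.integrableOn_const measure_Ioc_lt_top.ne)
      measurableSet_Ioc
    intro x hx
    exact f_le_one hf (hs.trans hx.1.le)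
  have h2 : (∫ x in Set.Ioc s t, (1:ℝ)) = t - s := by
    simp [Real.volume_Ioc, ENNReal.toReal_ofReal (by linarith : (0:ℝ) ≤ t - s), hst]
  linarith

theorem exists_ccdf_le (hf : IsChainingDensity f) {p : ℝ} (hp : 0 < p) :
    ∃ s, 0 ≤ s ∧ ccdf f s ≤ p := by
  have h := MeasureTheory.intervalIntegral_tendsto_integral_Ioi 0 (integrableOn_f hf) Filter.tendsto_id
  rw [hf.total] at h
  have h2 : ∀ᶠ b in Filter.atTop, (1:ℝ) - p < ∫ x in (0:ℝ)..b, f x :=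
    h.eventually (eventually_gt_nhds (by linarith))
  obtain ⟨b, hb1, hb0⟩ := (h2.and (Filter.eventually_ge_atTop (0:ℝ))).exists
  refine ⟨b, hb0, ?_⟩
  have := ccdf_split hf le_rfl hb0
  rw [ccdf_zero hf] at this
  rw [intervalIntegral.integral_of_le hb0] at hb1
  linarith

theorem chainFn_nonneg (f : ℝ → ℝ) (p : ℝ) : 0 ≤ chainFn f p :=
  Real.sInf_nonneg fun _ hx => hx.1

/-- the defining set, via a globally continuous modification -/
theorem setS_closed (hf : IsChainingDensity f) (p : ℝ) :
    IsClosed {s : ℝ | 0 ≤ s ∧ ccdf f s ≤ p} := by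
  have key : ∀ u v : ℝ, 0 ≤ u → u ≤ v → |ccdf f v - ccdf f u| ≤ v - u := by
    intro u v hu huv
    have h1 := ccdf_lip hf hu huv
    have h2 := ccdf_anti hf hu huv
    rw [abs_sub_comm, abs_of_nonneg (by linarith)]
    linarith
  have key2 : ∀ a b : ℝ, |ccdf f (max a 0) - ccdf f (max b 0)| ≤ |a - b| := by
    intro a b
    have hmax : |max a 0 - max b 0| ≤ |a - b| := abs_max_sub_max_le_abs a b 0
    rcases le_total (max a 0) (max b 0) with h | h
    · rw [abs_sub_comm]
      refine (key _ _ (le_max_right a 0) h).trans ?_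
      calc max b 0 - max a 0 ≤ |max b 0 - max a 0| := le_abs_self _
        _ = |max a 0 - max b 0| := abs_sub_comm _ _
        _ ≤ |a - b| := hmax
    · refine (key _ _ (le_max_right b 0) h).trans ?_
      exact (le_abs_self _).trans hmax
  have hc : Continuous (fun s => ccdf f (max s 0)) := by
    rw [Metric.continuous_iff]
    intro b ε hε
    exact ⟨ε, hε, fun a hab => lt_of_le_of_lt (key2 a b) hab⟩
  have : {s : ℝ | 0 ≤ s ∧ ccdf f s ≤ p} = Set.Ici 0 ∩ (fun s => ccdf f (max s 0)) ⁻¹' Set.Iic p := by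
    ext s
    simp only [Set.mem_setOf_eq, Set.mem_inter_iff, Set.mem_Ici, Set.mem_preimage, Set.mem_Iic]
    constructor
    · rintro ⟨h1, h2⟩; exact ⟨h1, by rwa [max_eq_left h1]⟩
    · rintro ⟨h1, h2⟩; exact ⟨h1, by rwa [max_eq_left h1] at h2⟩
  rw [this]
  exact isClosed_Ici.inter (IsClosed.preimage hc isClosed_Iic)

theorem chainFn_mem (hf : IsChainingDensity f) {p : ℝ} (hp : 0 < p) :
    0 ≤ chainFn f p ∧ ccdf f (chainFn f p) ≤ p := by
  have hne : {s : ℝ | 0 ≤ s ∧ ccdf f s ≤ p}.Nonempty := exists_ccdf_le hf hp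
  have hbdd : BddBelow {s : ℝ | 0 ≤ s ∧ ccdf f s ≤ p} := ⟨0, fun x hx => hx.1⟩
  exact (setS_closed hf p).csInf_mem hne hbdd

theorem chainFn_le {p s : ℝ} (hs : 0 ≤ s) (h : ccdf f s ≤ p) :
    chainFn f p ≤ s :=
  csInf_le ⟨0, fun x hx => hx.1⟩ ⟨hs, h⟩

theorem chainFn_anti (hf : IsChainingDensity f) {p q : ℝ} (hp : 0 < p) (hpq : p ≤ q) :
    chainFn f q ≤ chainFn f p := by
  obtain ⟨h1, h2⟩ := chainFn_mem hf hp
  exact chainFn_le h1 (h2.trans hpq)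

theorem chainFnE_ge (f : ℝ → ℝ) (p : ℝ) : ENNReal.ofReal (chainFn f p) ≤ chainFnE f p := by
  apply le_sInf
  rintro t ⟨s, hs0, hsp, rfl⟩
  exact ENNReal.ofReal_le_ofReal (csInf_le ⟨0, fun x hx => hx.1⟩ ⟨hs0, hsp⟩)

theorem chainFnE_anti (f : ℝ → ℝ) {p q : ℝ} (hpq : p ≤ q) : chainFnE f q ≤ chainFnE f p := by
  apply sInf_le_sInf
  rintro t ⟨s, hs0, hsp, rfl⟩
  exact ⟨s, hs0, hsp.trans hpq, rfl⟩

theorem chainFn_le_chainFnE_zero (f : ℝ → ℝ) {q : ℝ} (hq : 0 < q) :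
    ENNReal.ofReal (chainFn f q) ≤ chainFnE f 0 := by
  apply le_sInf
  rintro t ⟨s, hs0, hsp, rfl⟩
  exact ENNReal.ofReal_le_ofReal (chainFn_le (f := f) hs0 (hsp.trans hq.le))


theorem spread (hf : IsChainingDensity f) {a b c d : ℝ} (ha : 0 ≤ a) (hab : a ≤ b)
    (hac : a ≤ c) (hbd : b ≤ d) (hcd : c ≤ d) (hsum : a + d = b + c) :
    f a * f d ≤ f b * f c := by
  have hb0 : 0 ≤ b := ha.trans hab
  have hc0 : 0 ≤ c := ha.trans hac
  have hd0 : 0 ≤ d := hb0.trans hbd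
  rcases eq_or_lt_of_le (hab.trans hbd) with had | had
  · have hb : b = a := le_antisymm (by linarith) hab
    have hc : c = d := by linarith
    rw [hb, hc]
  · set l : ℝ := (d - b) / (d - a) with hl
    have hda : 0 < d - a := by linarith
    have hl0 : 0 ≤ l := div_nonneg (by linarith) hda.le
    have hl1 : l ≤ 1 := (div_le_one hda).2 (by linarith)
    have hb' : l * a + (1 - l) * d = b := by have h := div_mul_cancel₀ (d - b) hda.ne'; rw [← hl] at h; linear_combination -h
    have hc' : (1 - l) * a + (1 - (1 - l)) * d = c := by field_simp [hl]; ring_nf; nlinarith [hsum]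
    have H1 := hf.logConcave a ha d hd0 l ⟨hl0, hl1⟩
    have H2 := hf.logConcave a ha d hd0 (1 - l) ⟨by linarith, by linarith⟩
    rw [hb'] at H1
    rw [hc'] at H2
    rcases eq_or_lt_of_le (hf.nonneg a ha) with hfa | hfa
    · rw [← hfa]
      simpa using mul_nonneg (hf.nonneg b hb0) (hf.nonneg c hc0)
    rcases eq_or_lt_of_le (hf.nonneg d hd0) with hfd | hfd
    · rw [← hfd]
      simpa using mul_nonneg (hf.nonneg b hb0) (hf.nonneg c hc0)
    have key : (f a ^ l * f d ^ (1 - l)) * (f a ^ (1 - l) * f d ^ (1 - (1 - l))) = f a * f d := by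
      rw [show (f a ^ l * f d ^ (1 - l)) * (f a ^ (1 - l) * f d ^ (1 - (1 - l)))
          = (f a ^ l * f a ^ (1 - l)) * (f d ^ (1 - l) * f d ^ (1 - (1 - l))) by ring,
        ← Real.rpow_add hfa, ← Real.rpow_add hfd]
      norm_num
    calc f a * f d = (f a ^ l * f d ^ (1 - l)) * (f a ^ (1 - l) * f d ^ (1 - (1 - l))) := key.symm
      _ ≤ f b * f c := by
          apply mul_le_mul H1 H2 (mul_nonneg (Real.rpow_nonneg hfa.le _) (Real.rpow_nonneg hfd.le _))
            (hf.nonneg b hb0)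

/-- translation identity for set integrals -/
theorem shift_integral (f : ℝ → ℝ) (s : ℝ) (A : Set ℝ) :
    ∫ x in (fun x => x + s) ⁻¹' A, f (x + s) = ∫ y in A, f y := by
  have he : MeasurableEmbedding (fun x : ℝ => x + s) :=
    (Homeomorph.addRight s).measurableEmbedding
  rw [← he.setIntegral_map f A, map_add_right_eq_self volume s]

theorem shift_Ioi (s t : ℝ) : (fun x : ℝ => x + s) ⁻¹' Set.Ioi (t + s) = Set.Ioi t := by
  ext x; simp

theorem shift_Ioc (s a b : ℝ) :
    (fun x : ℝ => x + s) ⁻¹' Set.Ioc (a + s) (b + s) = Set.Ioc a b := by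
  ext x; simp

theorem integrable_shift (hf : IsChainingDensity f) {s : ℝ} (hs : 0 ≤ s) {A : Set ℝ}
    (hA : MeasurableSet A) (hA' : A ⊆ Set.Ioi 0) :
    IntegrableOn (fun x => f (x + s)) A := by
  have he : MeasurableEmbedding (fun x : ℝ => x + s) :=
    (Homeomorph.addRight s).measurableEmbedding
  have : IntegrableOn f ((fun x : ℝ => x + s) '' A) := by
    apply (integrableOn_f hf).mono_set
    rintro y ⟨x, hx, rfl⟩
    have := hA' hx
    simp only [Set.mem_Ioi] at this ⊢
    linarith
  unfold IntegrableOn at this ⊢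
  rw [← map_add_right_eq_self volume s, Measure.restrict_map (by fun_prop) (he.measurableSet_image.2 hA),
    he.integrable_map_iff] at this
  rwa [Set.preimage_image_eq A he.injective] at this

theorem ccdf_submult (hf : IsChainingDensity f) {s t : ℝ} (hs : 0 ≤ s) (ht : 0 ≤ t) :
    ccdf f (s + t) ≤ ccdf f s * ccdf f t := by
  set g : ℝ → ℝ := fun x => f (x + s) with hg
  have hIoiT : Set.Ioi t ⊆ Set.Ioi 0 := Set.Ioi_subset_Ioi ht
  have hIocT : Set.Ioc 0 t ⊆ Set.Ioi 0 := Set.Ioc_subset_Ioi_self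
  have hgIoi : IntegrableOn g (Set.Ioi t) := integrable_shift hf hs measurableSet_Ioi hIoiT
  have hgIoc : IntegrableOn g (Set.Ioc 0 t) := integrable_shift hf hs measurableSet_Ioc hIocT
  have hfIoi : IntegrableOn f (Set.Ioi t) := integrableOn_f' hf ht
  have hfIoc : IntegrableOn f (Set.Ioc 0 t) := integrableOn_f_Ioc hf le_rfl
  -- translations
  have E1 : ∫ x in Set.Ioi t, g x = ccdf f (s + t) := by
    rw [hg]
    have := shift_integral f s (Set.Ioi (t + s))
    rw [shift_Ioi] at this
    rw [this]
    unfold ccdf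
    rw [add_comm t s]
  have E3 : ∫ x in Set.Ioi 0, g x = ccdf f s := by
    rw [hg]
    have := shift_integral f s (Set.Ioi (0 + s))
    rw [shift_Ioi] at this
    rw [this]
    unfold ccdf
    rw [zero_add]
  have Esplit : ccdf f s = (∫ x in Set.Ioc 0 t, g x) + (∫ x in Set.Ioi t, g x) := by
    rw [← E3, ← Set.Ioc_union_Ioi_eq_Ioi ht,
      MeasureTheory.setIntegral_union (Set.Ioc_disjoint_Ioi le_rfl) measurableSet_Ioi hgIoc hgIoi]
  have Et : ccdf f 0 = (∫ x in Set.Ioc 0 t, f x) + ccdf f t := ccdf_split hf le_rfl ht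
  rw [ccdf_zero hf] at Et
  -- nonnegativity
  have gnn : ∀ x ∈ Set.Ioi (0:ℝ), 0 ≤ g x := fun x hx => hf.nonneg _ (by simp only [Set.mem_Ioi] at hx; linarith)
  have n1 : 0 ≤ ∫ x in Set.Ioi t, g x :=
    MeasureTheory.setIntegral_nonneg measurableSet_Ioi (fun x hx => gnn x (hIoiT hx))
  have n2 : 0 ≤ ∫ x in Set.Ioc 0 t, g x :=
    MeasureTheory.setIntegral_nonneg measurableSet_Ioc (fun x hx => gnn x (hIocT hx))
  have n3 : 0 ≤ ∫ x in Set.Ioi t, f x :=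
    MeasureTheory.setIntegral_nonneg measurableSet_Ioi (fun x hx => hf.nonneg x (le_of_lt (lt_of_le_of_lt ht hx)))
  have n4 : 0 ≤ ∫ x in Set.Ioc 0 t, f x :=
    MeasureTheory.setIntegral_nonneg measurableSet_Ioc (fun x hx => hf.nonneg x hx.1.le)
  -- KEY product inequality
  have KEY : (∫ x in Set.Ioi t, g x) * (∫ y in Set.Ioc 0 t, f y)
      ≤ (∫ x in Set.Ioi t, f x) * (∫ y in Set.Ioc 0 t, g y) := by
    rw [← MeasureTheory.setIntegral_prod_mul g f (Set.Ioi t) (Set.Ioc 0 t),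
      ← MeasureTheory.setIntegral_prod_mul f g (Set.Ioi t) (Set.Ioc 0 t)]
    have hmeas : MeasurableSet (Set.Ioi t ×ˢ Set.Ioc (0:ℝ) t) :=
      measurableSet_Ioi.prod measurableSet_Ioc
    apply MeasureTheory.setIntegral_mono_on
    · unfold IntegrableOn
      rw [← Measure.prod_restrict]
      exact hgIoi.mul_prod hfIoc
    · unfold IntegrableOn
      rw [← Measure.prod_restrict]
      exact hfIoi.mul_prod hgIoc
    · exact hmeas
    · rintro ⟨x, y⟩ ⟨hx, hy⟩
      simp only [Set.mem_Ioi, Set.mem_Ioc] at hx hy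
      have : f y * f (x + s) ≤ f x * f (y + s) := by
        apply spread hf hy.1.le (le_of_lt (lt_of_le_of_lt hy.2 hx)) (by linarith) (by linarith)
          (by linarith)
        ring
      calc g x * f y = f y * f (x + s) := by rw [hg]; ring
        _ ≤ f x * f (y + s) := this
        _ = f x * g y := by rw [hg]
  calc ccdf f (s + t) = (∫ x in Set.Ioi t, g x) * ((∫ x in Set.Ioc 0 t, f x) + ccdf f t) := by
        rw [← Et, ← E1]; ring
    _ = (∫ x in Set.Ioi t, g x) * (∫ x in Set.Ioc 0 t, f x)
        + (∫ x in Set.Ioi t, g x) * ccdf f t := by ring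
    _ ≤ (∫ x in Set.Ioi t, f x) * (∫ x in Set.Ioc 0 t, g x)
        + (∫ x in Set.Ioi t, g x) * ccdf f t := by linarith [KEY]
    _ = ccdf f s * ccdf f t := by
        have hct : ccdf f t = ∫ x in Set.Ioi t, f x := rfl
        rw [Esplit, hct]; ring

theorem chainFn_submult (hf : IsChainingDensity f) {p q : ℝ} (hp : 0 < p) (hq : 0 < q) :
    chainFn f (p * q) ≤ chainFn f p + chainFn f q := by
  obtain ⟨hp0, hpF⟩ := chainFn_mem hf hp
  obtain ⟨hq0, hqF⟩ := chainFn_mem hf hq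
  apply chainFn_le (by linarith)
  calc ccdf f (chainFn f p + chainFn f q) ≤ ccdf f (chainFn f p) * ccdf f (chainFn f q) :=
        ccdf_submult hf hp0 hq0
    _ ≤ p * q := mul_le_mul hpF hqF (ccdf_nonneg hf hq0) hp.le

theorem chainFn_half (hf : IsChainingDensity f) {p : ℝ} (hp : 0 < p) :
    chainFn f (p / 2) ≤ chainFn f p + chainFn f (1/2) := by
  have := chainFn_submult hf hp (by norm_num : (0:ℝ) < 1/2)
  rw [show p * (1/2) = p / 2 by ring] at this
  exact this

theorem chainFn_eighth (hf : IsChainingDensity f) {p : ℝ} (hp : 0 < p) :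
    chainFn f (p / 8) ≤ chainFn f p + 3 * chainFn f (1/2) := by
  have h1 := chainFn_half hf hp
  have h2 := chainFn_half hf (by linarith : 0 < p / 2)
  have h3 := chainFn_half hf (by linarith : 0 < p / 2 / 2)
  have : p / 2 / 2 / 2 = p / 8 := by ring
  rw [this] at h3
  linarith


section Mass

variable {X : Type*} [MetricSpace X] [Fintype X] {ρ : X → ℝ}

/-- the closed ball as a finset -/
def ballF (x : X) (r : ℝ) : Finset X := Finset.univ.filter (fun y => dist x y ≤ r)

theorem ballMass_eq (ρ : X → ℝ) (x : X) (r : ℝ) : ballMass ρ x r = ∑ y ∈ ballF x r, ρ y := rfl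

theorem ballMass_nonneg (hρ : IsProbOn ρ) (x : X) (r : ℝ) : 0 ≤ ballMass ρ x r :=
  Finset.sum_nonneg fun y _ => hρ.1 y

theorem ballMass_le_sum (hρ : IsProbOn ρ) {x : X} {r : ℝ} {S : Finset X}
    (h : ballF x r ⊆ S) : ballMass ρ x r ≤ ∑ y ∈ S, ρ y :=
  Finset.sum_le_sum_of_subset_of_nonneg h (fun y _ _ => hρ.1 y)

theorem ballMass_mono (hρ : IsProbOn ρ) (x : X) {r r' : ℝ} (h : r ≤ r') :
    ballMass ρ x r ≤ ballMass ρ x r' :=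
by
  apply ballMass_le_sum hρ
  intro y hy
  simp only [ballF, Finset.mem_filter, Finset.mem_univ, true_and] at hy ⊢
  exact hy.trans h

theorem ballMass_le_one (hρ : IsProbOn ρ) (x : X) (r : ℝ) : ballMass ρ x r ≤ 1 := by
  rw [← hρ.2]
  exact ballMass_le_sum hρ (Finset.subset_univ _)

theorem lint_lower (f : ℝ → ℝ) (ρ : X → ℝ) {x : X} {a b : ℝ} (hab : a ≤ b) (c : ℝ≥0∞)
    (hc : ∀ r ∈ Set.Ioc a b, c ≤ chainFnE f (ballMass ρ x r)) :
    c * ENNReal.ofReal (b - a) ≤ ∫⁻ r in Set.Ioc a b, chainFnE f (ballMass ρ x r) := by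
  calc c * ENNReal.ofReal (b - a) = c * volume (Set.Ioc a b) := by rw [Real.volume_Ioc]
    _ = ∫⁻ _ in Set.Ioc a b, c := (MeasureTheory.setLIntegral_const _ _).symm
    _ ≤ _ := MeasureTheory.setLIntegral_mono' measurableSet_Ioc hc

theorem lint_split (g : ℝ → ℝ≥0∞) {a b c : ℝ} (hab : a ≤ b) (hbc : b ≤ c) :
    (∫⁻ r in Set.Ioc a b, g r) + (∫⁻ r in Set.Ioc b c, g r) = ∫⁻ r in Set.Ioc a c, g r := by
  rw [← Set.Ioc_union_Ioc_eq_Ioc hab hbc,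
    MeasureTheory.Measure.restrict_union (Set.Ioc_disjoint_Ioc_of_le le_rfl) measurableSet_Ioc,
    MeasureTheory.lintegral_add_measure]

theorem lint_Ioc_le_Hint (f : ℝ → ℝ) (ρ : X → ℝ) (x : X) (b : ℝ) :
    (∫⁻ r in Set.Ioc 0 b, chainFnE f (ballMass ρ x r)) ≤ Hint f ρ x :=
  MeasureTheory.lintegral_mono' (MeasureTheory.Measure.restrict_mono Set.Ioc_subset_Ioi_self le_rfl)
    le_rfl

theorem lint_Ioo_le_Hint (f : ℝ → ℝ) (ρ : X → ℝ) (x : X) (b : ℝ) :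
    (∫⁻ r in Set.Ioo 0 b, chainFnE f (ballMass ρ x r)) ≤ Hint f ρ x :=
  MeasureTheory.lintegral_mono' (MeasureTheory.Measure.restrict_mono Set.Ioo_subset_Ioi_self le_rfl)
    le_rfl

end Mass


section Build

variable {X : Type*} [MetricSpace X] [Fintype X]

open scoped Classical

/-- the scale at level `k` -/
def rad (Δ : ℝ) (k : ℕ) : ℝ := Δ * (2⁻¹ : ℝ) ^ k

theorem rad_succ (Δ : ℝ) (k : ℕ) : rad Δ (k + 1) = rad Δ k / 2 := by
  unfold rad; rw [pow_succ]; ring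

theorem rad_pos {Δ : ℝ} (hΔ : 0 < Δ) (k : ℕ) : 0 < rad Δ k :=
  mul_pos hΔ (pow_pos (by norm_num) k)

theorem rad_nonneg {Δ : ℝ} (hΔ : 0 < Δ) (k : ℕ) : 0 ≤ rad Δ k := (rad_pos hΔ k).le

theorem rad_anti {Δ : ℝ} (hΔ : 0 < Δ) {j k : ℕ} (h : j ≤ k) : rad Δ k ≤ rad Δ j := by
  unfold rad
  apply mul_le_mul_of_nonneg_left _ hΔ.le
  exact pow_le_pow_of_le_one (by norm_num) (by norm_num) h

/-- a point of `C'` with maximal ball mass at scale `r` -/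
def amax (ρ : X → ℝ) (r : ℝ) (C' : Finset X) (h : C'.Nonempty) : X :=
  (C'.exists_max_image (fun y => ballMass ρ y r) h).choose

theorem amax_mem (ρ : X → ℝ) (r : ℝ) (C' : Finset X) (h : C'.Nonempty) :
    amax ρ r C' h ∈ C' :=
  (C'.exists_max_image (fun y => ballMass ρ y r) h).choose_spec.1

theorem amax_spec (ρ : X → ℝ) (r : ℝ) (C' : Finset X) (h : C'.Nonempty) :
    ∀ y ∈ C', ballMass ρ y r ≤ ballMass ρ (amax ρ r C' h) r :=
  (C'.exists_max_image (fun y => ballMass ρ y r) h).choose_spec.2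

mutual

/-- build the tree inside a cluster `C` with center `u` at scale-level `k`, weight `w`. -/
noncomputable def buildC (ρ : X → ℝ) (Δ : ℝ) : ℕ → Finset X → X → ℕ → ℝ → (X → X) × (X → ℝ)
  | 0, _, _, _, _ => (fun y => y, fun _ => 0)
  | (fuel+1), C, u, k, w =>
    if C.card ≤ 1 then (fun y => y, fun _ => 0) else
    let r' := rad Δ (k+1)
    let D1 := C.filter (fun y => dist u y ≤ 2 * r')
    let inner := buildC ρ Δ fuel D1 u (k+1) (w/8)
    let rest := buildR ρ Δ fuel (C \ D1) u k w
    (fun y => if y ∈ D1 then inner.1 y else rest.1 y,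
     fun y => if y ∈ D1 then inner.2 y else rest.2 y)

/-- process the remaining part `C'` of a cluster at scale-level `k`; pieces hang off `u`. -/
noncomputable def buildR (ρ : X → ℝ) (Δ : ℝ) : ℕ → Finset X → X → ℕ → ℝ → (X → X) × (X → ℝ)
  | 0, _, _, _, _ => (fun y => y, fun _ => 0)
  | (fuel+1), C', u, k, w =>
    if h : C'.Nonempty then
      let r' := rad Δ (k+1)
      let v := amax ρ r' C' h
      let D := C'.filter (fun y => dist v y ≤ 2 * r')
      let q := (ballMass ρ v r' + (D.card : ℝ) / (Fintype.card X : ℝ)) / 8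
      let inner := buildC ρ Δ fuel D v (k+1) (w * q)
      let rest := buildR ρ Δ fuel (C' \ D) u k w
      (fun y => if y ∈ D then (if y = v then u else inner.1 y) else rest.1 y,
       fun y => if y ∈ D then (if y = v then w * q else inner.2 y) else rest.2 y)
    else (fun y => y, fun _ => 0)

end

/-- the cost of the first `N` steps of the parent walk from `x` -/
def costN (f : ℝ → ℝ) (par : X → X) (pr : X → ℝ) (x : X) (N : ℕ) : ℝ :=
  ∑ n ∈ Finset.range N, dist (par^[n] x) (par (par^[n] x)) * chainFn f (pr (par^[n] x))

/-- the inductive cost bound -/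
def EBound (f : ℝ → ℝ) (ρ : X → ℝ) (Δ : ℝ) (k : ℕ) (Wx : ℝ≥0∞) (x : X) : ℝ≥0∞ :=
  8 * ENNReal.ofReal (rad Δ (k+1)) * Wx
  + 48 * ENNReal.ofReal (rad Δ (k+1) * chainFn f (1/2))
  + 16 * ∫⁻ r in Set.Ioc 0 (rad Δ (k+1)), chainFnE f (ballMass ρ x r)

theorem costN_nonneg (f : ℝ → ℝ) (par : X → X) (pr : X → ℝ) (x : X) (N : ℕ) :
    0 ≤ costN f par pr x N :=
  Finset.sum_nonneg fun n _ => mul_nonneg dist_nonneg (chainFn_nonneg f _)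


theorem iterate_stay (par : X → X) (D : Finset X) (hD : ∀ y ∈ D, par y ∈ D) {x : X}
    (hx : x ∈ D) (n : ℕ) : par^[n] x ∈ D := by
  induction n with
  | zero => simpa using hx
  | succ n ih => rw [Function.iterate_succ_apply']; exact hD _ ih

theorem iterate_agree (par par' : X → X) (D : Finset X) (hagree : ∀ y ∈ D, par y = par' y)
    (hD : ∀ y ∈ D, par' y ∈ D) {x : X} (hx : x ∈ D) (n : ℕ) : par^[n] x = par'^[n] x := by
  induction n with
  | zero => rfl
  | succ n ih =>
      rw [Function.iterate_succ_apply', Function.iterate_succ_apply', ih,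
        hagree _ (iterate_stay par' D hD hx n)]

theorem costN_congr (f : ℝ → ℝ) (par par' : X → X) (pr pr' : X → ℝ) (D : Finset X)
    (hagree : ∀ y ∈ D, par y = par' y) (hagree' : ∀ y ∈ D, pr y = pr' y)
    (hD : ∀ y ∈ D, par' y ∈ D) {x : X} (hx : x ∈ D) (N : ℕ) :
    costN f par pr x N = costN f par' pr' x N := by
  unfold costN
  apply Finset.sum_congr rfl
  intro n _
  have he := iterate_agree par par' D hagree hD hx n
  have hm := iterate_stay par' D hD hx n
  rw [he, hagree _ hm, hagree' _ hm]

/-- The splice lemma: walking in the combined tree from `x ∈ D` first follows the inner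
tree to `v`, then takes the edge `v → u` and stays at `u`. -/
theorem splice (f : ℝ → ℝ) (par inpar : X → X) (pr inpr : X → ℝ) (D : Finset X) (v u : X)
    (huD : u ∉ D)
    (hagree : ∀ y ∈ D, y ≠ v → par y = inpar y ∧ pr y = inpr y)
    (hin : ∀ y ∈ D, inpar y ∈ D)
    (hparv : par v = u) (hparu : par u = u) (hpru : pr u = 0) (hinparv : inpar v = v)
    {x : X} (hx : x ∈ D) (hreach : ∃ n, inpar^[n] x = v) :
    (∃ m, par^[m] x = u) ∧
      ∀ N, costN f par pr x N ≤
        costN f inpar inpr x (Nat.find hreach) + dist v u * chainFn f (pr v) := by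
  set n₀ := Nat.find hreach with hn₀
  have hfind : inpar^[n₀] x = v := Nat.find_spec hreach
  have hstay : ∀ n, inpar^[n] x ∈ D := fun n => iterate_stay inpar D hin hx n
  have hpre : ∀ n, n ≤ n₀ → par^[n] x = inpar^[n] x := by
    intro n hn
    induction n with
    | zero => rfl
    | succ n ih =>
        have hn' : n < n₀ := hn
        have hne : inpar^[n] x ≠ v := Nat.find_min hreach hn'
        rw [Function.iterate_succ_apply', Function.iterate_succ_apply', ih (le_of_lt hn'),
          (hagree _ (hstay n) hne).1]
  have hat : par^[n₀] x = v := by rw [hpre n₀ le_rfl, hfind]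
  have hpost : ∀ m, par^[n₀ + 1 + m] x = u := by
    intro m
    induction m with
    | zero => rw [show n₀ + 1 + 0 = n₀ + 1 by ring, Function.iterate_succ_apply', hat, hparv]
    | succ m ih => rw [show n₀ + 1 + (m+1) = (n₀ + 1 + m) + 1 by ring,
        Function.iterate_succ_apply', ih, hparu]
  refine ⟨⟨n₀ + 1, hpost 0⟩, ?_⟩
  intro N
  have term_nonneg : ∀ (g : X → X) (p : X → ℝ) (z : X),
      0 ≤ dist z (g z) * chainFn f (p z) := fun g p z => mul_nonneg dist_nonneg (chainFn_nonneg f _)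
  have edge_nonneg : 0 ≤ dist v u * chainFn f (pr v) :=
    mul_nonneg dist_nonneg (chainFn_nonneg f _)
  rcases le_or_gt N n₀ with hN | hN
  · have : costN f par pr x N = costN f inpar inpr x N := by
      unfold costN
      apply Finset.sum_congr rfl
      intro n hn
      rw [Finset.mem_range] at hn
      have hn' : n < n₀ := lt_of_lt_of_le hn hN
      have hne : inpar^[n] x ≠ v := Nat.find_min hreach hn'
      have hmem := hstay n
      rw [hpre n (le_of_lt hn'), (hagree _ hmem hne).1, (hagree _ hmem hne).2]
    rw [this]
    have : costN f inpar inpr x N ≤ costN f inpar inpr x n₀ := by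
      unfold costN
      apply Finset.sum_le_sum_of_subset_of_nonneg
      · exact Finset.range_subset_range.2 hN
      · intro n _ _; exact term_nonneg _ _ _
    linarith
  · -- N > n₀ : cost is constant from n₀+1 on
    have key : ∀ M, costN f par pr x (n₀ + 1 + M) = costN f par pr x (n₀ + 1) := by
      intro M
      induction M with
      | zero => rfl
      | succ M ih =>
          rw [show n₀ + 1 + (M+1) = (n₀ + 1 + M) + 1 by ring]
          unfold costN
          rw [Finset.sum_range_succ]
          have : par^[n₀ + 1 + M] x = u := hpost M
          rw [this, hparu, dist_self, zero_mul, add_zero]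
          exact ih
    obtain ⟨M, rfl⟩ : ∃ M, N = n₀ + 1 + M := ⟨N - (n₀ + 1), by omega⟩
    rw [key M]
    have expand : costN f par pr x (n₀ + 1) =
        costN f par pr x n₀ + dist v (par v) * chainFn f (pr v) := by
      unfold costN
      rw [Finset.sum_range_succ, hat]
    have eqpre : costN f par pr x n₀ = costN f inpar inpr x n₀ := by
      unfold costN
      apply Finset.sum_congr rfl
      intro n hn
      rw [Finset.mem_range] at hn
      have hne : inpar^[n] x ≠ v := Nat.find_min hreach hn
      have hmem := hstay n
      rw [hpre n (le_of_lt hn), (hagree _ hmem hne).1, (hagree _ hmem hne).2]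
    rw [expand, eqpre, hparv]

theorem rad_sub (Δ : ℝ) (k : ℕ) : rad Δ (k+1) - rad Δ (k+2) = rad Δ (k+2) := by
  rw [rad_succ Δ (k+1)]; ring

theorem ofReal_rad_succ {Δ : ℝ} (hΔ : 0 < Δ) (k : ℕ) :
    ENNReal.ofReal (rad Δ (k+1)) = 2 * ENNReal.ofReal (rad Δ (k+2)) := by
  rw [show rad Δ (k+1) = 2 * rad Δ (k+2) by rw [rad_succ Δ (k+1)]; ring,
    ENNReal.ofReal_mul (by norm_num)]
  norm_num

/-- Arithmetic: recursion step of the cost bound, with an edge and a charge. -/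
theorem EBound_step (f : ℝ → ℝ) (ρ : X → ℝ) {Δ : ℝ} (hΔ : 0 < Δ) (k : ℕ) (x : X)
    (Wx e : ℝ≥0∞)
    (hcharge : ENNReal.ofReal (rad Δ (k+2)) * e ≤
      ∫⁻ r in Set.Ioc (rad Δ (k+2)) (rad Δ (k+1)), chainFnE f (ballMass ρ x r)) :
    EBound f ρ Δ (k+1) (Wx + 3 * ENNReal.ofReal (chainFn f (1/2)) + e) x
      + ENNReal.ofReal (4 * rad Δ (k+1)) * (Wx + 3 * ENNReal.ofReal (chainFn f (1/2)) + e)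
    ≤ EBound f ρ Δ k Wx x := by
  set H : ℝ≥0∞ := ENNReal.ofReal (chainFn f (1/2)) with hH
  set R2 : ℝ≥0∞ := ENNReal.ofReal (rad Δ (k+2)) with hR2
  set I2 : ℝ≥0∞ := ∫⁻ r in Set.Ioc 0 (rad Δ (k+2)), chainFnE f (ballMass ρ x r) with hI2
  set Im : ℝ≥0∞ := ∫⁻ r in Set.Ioc (rad Δ (k+2)) (rad Δ (k+1)), chainFnE f (ballMass ρ x r) with hIm
  set I1 : ℝ≥0∞ := ∫⁻ r in Set.Ioc 0 (rad Δ (k+1)), chainFnE f (ballMass ρ x r) with hI1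
  have hsplit : I2 + Im = I1 :=
    lint_split _ (rad_nonneg hΔ (k+2)) (rad_anti hΔ (by omega))
  have hR1 : ENNReal.ofReal (rad Δ (k+1)) = 2 * R2 := ofReal_rad_succ hΔ k
  have hR4 : ENNReal.ofReal (4 * rad Δ (k+1)) = 8 * R2 := by
    rw [ENNReal.ofReal_mul (by norm_num), hR1]
    norm_num
    ring
  have hofH2 : ENNReal.ofReal (rad Δ (k+2) * chainFn f (1/2)) = R2 * H := by
    rw [ENNReal.ofReal_mul (rad_nonneg hΔ (k+2))]
  have hofH1 : ENNReal.ofReal (rad Δ (k+1) * chainFn f (1/2))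
      = 2 * R2 * H := by
    rw [ENNReal.ofReal_mul (rad_nonneg hΔ (k+1)), hR1]
  unfold EBound
  rw [show k + 1 + 1 = k + 2 from rfl, hR1, hR4, hofH2, hofH1, ← hI2, ← hI1]
  calc 8 * R2 * (Wx + 3 * H + e) + 48 * (R2 * H) + 16 * I2
        + 8 * R2 * (Wx + 3 * H + e)
      = 8 * (2 * R2) * Wx + 48 * (2 * R2 * H) + (16 * I2 + 16 * (R2 * e)) := by ring
    _ ≤ 8 * (2 * R2) * Wx + 48 * (2 * R2 * H) + (16 * I2 + 16 * Im) := by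
        gcongr <;> exact hcharge
    _ = 8 * (2 * R2) * Wx + 48 * (2 * R2 * H) + 16 * (I2 + Im) := by ring
    _ = 8 * (2 * R2) * Wx + 48 * (2 * R2 * H) + 16 * I1 := by rw [hsplit]

/-- Arithmetic: recursion step of the cost bound, head cluster (no edge, no charge). -/
theorem EBound_stepC (f : ℝ → ℝ) (ρ : X → ℝ) {Δ : ℝ} (hΔ : 0 < Δ) (k : ℕ) (x : X)
    (Wx : ℝ≥0∞) :
    EBound f ρ Δ (k+1) (Wx + 3 * ENNReal.ofReal (chainFn f (1/2))) x
    ≤ EBound f ρ Δ k Wx x := by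
  have := EBound_step f ρ hΔ k x Wx 0 (by simp)
  refine le_trans ?_ this
  rw [add_zero]
  exact le_add_right le_rfl

/-- the charged quantity for a piece with center `v` -/
def chargeE (f : ℝ → ℝ) (ρ : X → ℝ) (m : ℝ) : ℝ≥0∞ :=
  if 0 < m then ENNReal.ofReal (chainFn f m) else chainFnE f 0

theorem charge_lemma (hf : IsChainingDensity f) {ρ : X → ℝ} (hρ : IsProbOn ρ) {Δ : ℝ}
    (hΔ : 0 < Δ) {x v : X} {k : ℕ}
    (hdom : ballMass ρ x (rad Δ (k+1)) ≤ ballMass ρ v (rad Δ (k+1))) :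
    ENNReal.ofReal (rad Δ (k+2)) * chargeE f ρ (ballMass ρ v (rad Δ (k+1))) ≤
      ∫⁻ r in Set.Ioc (rad Δ (k+2)) (rad Δ (k+1)), chainFnE f (ballMass ρ x r) := by
  set m := ballMass ρ v (rad Δ (k+1)) with hm
  have key : ∀ r ∈ Set.Ioc (rad Δ (k+2)) (rad Δ (k+1)),
      chargeE f ρ m ≤ chainFnE f (ballMass ρ x r) := by
    intro r hr
    have hrle : ballMass ρ x r ≤ m :=
      le_trans (ballMass_mono hρ x hr.2) hdom
    unfold chargeE
    split_ifs with hpos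
    · exact le_trans (chainFnE_ge f m) (chainFnE_anti f hrle)
    · have hm0 : m = 0 := le_antisymm (not_lt.1 hpos) (ballMass_nonneg hρ v _)
      have : ballMass ρ x r = 0 :=
        le_antisymm (by rw [← hm0]; exact hrle) (ballMass_nonneg hρ x r)
      rw [this]
  have hab : rad Δ (k+2) ≤ rad Δ (k+1) := rad_anti hΔ (by omega)
  have := lint_lower f ρ hab (chargeE f ρ m) key
  rw [rad_sub Δ k] at this
  rwa [mul_comm]

/-- the label bound for a piece with center `v` -/
theorem label_bound (hf : IsChainingDensity f) {ρ : X → ℝ} (hρ : IsProbOn ρ)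
    {w q m c : ℝ} (hw : 0 < w) (hq8 : q = (m + c) / 8) (hm : 0 ≤ m) (hc : 0 < c)
    (Wx : ℝ≥0∞) (hW : ENNReal.ofReal (chainFn f w) ≤ Wx) :
    ENNReal.ofReal (chainFn f (w * q)) ≤
      Wx + 3 * ENNReal.ofReal (chainFn f (1/2)) + chargeE f ρ m := by
  have hq : 0 < q := by rw [hq8]; positivity
  unfold chargeE
  split_ifs with hpos
  · -- m > 0 : chainFn (w*q) ≤ chainFn w + chainFn m + 3 * chainFn (1/2)
    have h1 : chainFn f (w * q) ≤ chainFn f w + chainFn f q := chainFn_submult hf hw hq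
    have h2 : chainFn f q ≤ chainFn f (m / 8) := by
      apply chainFn_anti hf (by positivity)
      rw [hq8]; linarith
    have h3 : chainFn f (m / 8) ≤ chainFn f m + 3 * chainFn f (1/2) := chainFn_eighth hf hpos
    calc ENNReal.ofReal (chainFn f (w * q))
        ≤ ENNReal.ofReal (chainFn f w + (chainFn f m + 3 * chainFn f (1/2))) := by
          apply ENNReal.ofReal_le_ofReal; linarith
      _ ≤ ENNReal.ofReal (chainFn f w) + ENNReal.ofReal (chainFn f m + 3 * chainFn f (1/2)) :=
          ENNReal.ofReal_add_le
      _ ≤ ENNReal.ofReal (chainFn f w) + (ENNReal.ofReal (chainFn f m)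
            + ENNReal.ofReal (3 * chainFn f (1/2))) := by
          gcongr
          exact ENNReal.ofReal_add_le
      _ ≤ Wx + 3 * ENNReal.ofReal (chainFn f (1/2)) + ENNReal.ofReal (chainFn f m) := by
          rw [ENNReal.ofReal_mul (by norm_num : (0:ℝ) ≤ 3)]
          calc ENNReal.ofReal (chainFn f w) + (ENNReal.ofReal (chainFn f m)
                + ENNReal.ofReal 3 * ENNReal.ofReal (chainFn f (1/2)))
              ≤ Wx + (ENNReal.ofReal (chainFn f m)
                + 3 * ENNReal.ofReal (chainFn f (1/2))) := by
                gcongr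
                · norm_num
            _ = Wx + 3 * ENNReal.ofReal (chainFn f (1/2)) + ENNReal.ofReal (chainFn f m) := by
                ring
  · calc ENNReal.ofReal (chainFn f (w * q)) ≤ chainFnE f 0 :=
        chainFn_le_chainFnE_zero f (by positivity)
      _ ≤ Wx + 3 * ENNReal.ofReal (chainFn f (1/2)) + chainFnE f 0 := le_add_self


theorem buildC_zero (ρ : X → ℝ) (Δ : ℝ) (C : Finset X) (u : X) (k : ℕ) (w : ℝ) :
    buildC ρ Δ 0 C u k w = (fun y => y, fun _ => 0) := rfl

theorem buildR_zero (ρ : X → ℝ) (Δ : ℝ) (C' : Finset X) (u : X) (k : ℕ) (w : ℝ) :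
    buildR ρ Δ 0 C' u k w = (fun y => y, fun _ => 0) := rfl

theorem buildC_triv (ρ : X → ℝ) (Δ : ℝ) (fuel : ℕ) (C : Finset X) (u : X) (k : ℕ) (w : ℝ)
    (h : C.card ≤ 1) : buildC ρ Δ fuel C u k w = (fun y => y, fun _ => 0) := by
  cases fuel with
  | zero => rfl
  | succ fuel => rw [buildC, if_pos h]

theorem buildR_empty (ρ : X → ℝ) (Δ : ℝ) (fuel : ℕ) (C' : Finset X) (u : X) (k : ℕ) (w : ℝ)
    (h : ¬ C'.Nonempty) : buildR ρ Δ fuel C' u k w = (fun y => y, fun _ => 0) := by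
  cases fuel with
  | zero => rfl
  | succ fuel => rw [buildR, dif_neg h]

theorem buildC_succ (ρ : X → ℝ) (Δ : ℝ) (fuel : ℕ) (C : Finset X) (u : X) (k : ℕ) (w : ℝ)
    (h : ¬ C.card ≤ 1) :
    buildC ρ Δ (fuel+1) C u k w =
      (fun y => if y ∈ C.filter (fun y => dist u y ≤ 2 * rad Δ (k+1))
          then (buildC ρ Δ fuel (C.filter (fun y => dist u y ≤ 2 * rad Δ (k+1))) u (k+1) (w/8)).1 y
          else (buildR ρ Δ fuel (C \ C.filter (fun y => dist u y ≤ 2 * rad Δ (k+1))) u k w).1 y,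
       fun y => if y ∈ C.filter (fun y => dist u y ≤ 2 * rad Δ (k+1))
          then (buildC ρ Δ fuel (C.filter (fun y => dist u y ≤ 2 * rad Δ (k+1))) u (k+1) (w/8)).2 y
          else (buildR ρ Δ fuel (C \ C.filter (fun y => dist u y ≤ 2 * rad Δ (k+1))) u k w).2 y) := by
  rw [buildC, if_neg h]

/-- the piece of `C'` grabbed by the greedy choice -/
def pieceD (ρ : X → ℝ) (Δ : ℝ) (k : ℕ) (C' : Finset X) (h : C'.Nonempty) : Finset X :=
  C'.filter (fun y => dist (amax ρ (rad Δ (k+1)) C' h) y ≤ 2 * rad Δ (k+1))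

/-- the weight factor of the piece -/
def pieceq (ρ : X → ℝ) (Δ : ℝ) (k : ℕ) (C' : Finset X) (h : C'.Nonempty) : ℝ :=
  (ballMass ρ (amax ρ (rad Δ (k+1)) C' h) (rad Δ (k+1))
    + ((pieceD ρ Δ k C' h).card : ℝ) / (Fintype.card X : ℝ)) / 8

theorem buildR_succ (ρ : X → ℝ) (Δ : ℝ) (fuel : ℕ) (C' : Finset X) (u : X) (k : ℕ) (w : ℝ)
    (h : C'.Nonempty) :
    buildR ρ Δ (fuel+1) C' u k w =
      (fun y => if y ∈ pieceD ρ Δ k C' h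
          then (if y = amax ρ (rad Δ (k+1)) C' h then u
            else (buildC ρ Δ fuel (pieceD ρ Δ k C' h) (amax ρ (rad Δ (k+1)) C' h) (k+1)
              (w * pieceq ρ Δ k C' h)).1 y)
          else (buildR ρ Δ fuel (C' \ pieceD ρ Δ k C' h) u k w).1 y,
       fun y => if y ∈ pieceD ρ Δ k C' h
          then (if y = amax ρ (rad Δ (k+1)) C' h then w * pieceq ρ Δ k C' h
            else (buildC ρ Δ fuel (pieceD ρ Δ k C' h) (amax ρ (rad Δ (k+1)) C' h) (k+1)
              (w * pieceq ρ Δ k C' h)).2 y)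
          else (buildR ρ Δ fuel (C' \ pieceD ρ Δ k C' h) u k w).2 y) := by
  rw [buildR, dif_pos h]
  rfl


def SpecC (f : ℝ → ℝ) (ρ : X → ℝ) (Δ : ℝ) (fuel : ℕ) (C : Finset X) (u : X) (k : ℕ)
    (w : ℝ) : Prop :=
  (∀ y, y ∉ C → (buildC ρ Δ fuel C u k w).1 y = y ∧ (buildC ρ Δ fuel C u k w).2 y = 0) ∧
  ((buildC ρ Δ fuel C u k w).1 u = u ∧ (buildC ρ Δ fuel C u k w).2 u = 0) ∧
  (∀ y ∈ C, (buildC ρ Δ fuel C u k w).1 y ∈ C) ∧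
  (∀ y ∈ C, y ≠ u → 0 < (buildC ρ Δ fuel C u k w).2 y ∧ (buildC ρ Δ fuel C u k w).2 y ≤ w) ∧
  ((∑ y ∈ C, (buildC ρ Δ fuel C u k w).2 y) ≤ w) ∧
  (∀ y ∈ C, ∃ n, (buildC ρ Δ fuel C u k w).1^[n] y = u) ∧
  (∀ W : X → ℝ≥0∞, (∀ x ∈ C, ENNReal.ofReal (chainFn f w) ≤ W x) →
    ∀ x ∈ C, ∀ N, ENNReal.ofReal (costN f (buildC ρ Δ fuel C u k w).1
      (buildC ρ Δ fuel C u k w).2 x N) ≤ EBound f ρ Δ k (W x) x)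

def SpecR (f : ℝ → ℝ) (ρ : X → ℝ) (Δ : ℝ) (fuel : ℕ) (C' : Finset X) (u : X) (k : ℕ)
    (w : ℝ) : Prop :=
  (∀ y, y ∉ C' → (buildR ρ Δ fuel C' u k w).1 y = y ∧ (buildR ρ Δ fuel C' u k w).2 y = 0) ∧
  (∀ y ∈ C', (buildR ρ Δ fuel C' u k w).1 y ∈ insert u C') ∧
  (∀ y ∈ C', 0 < (buildR ρ Δ fuel C' u k w).2 y ∧ (buildR ρ Δ fuel C' u k w).2 y ≤ w) ∧
  (∀ S : Finset X, (∀ y ∈ C', ∀ z : X, dist y z ≤ rad Δ (k+1) → z ∈ S) →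
    (∑ y ∈ C', (buildR ρ Δ fuel C' u k w).2 y) ≤
      w / 4 * ((∑ z ∈ S, ρ z) + (C'.card : ℝ) / (Fintype.card X : ℝ))) ∧
  (∀ y ∈ C', ∃ n, (buildR ρ Δ fuel C' u k w).1^[n] y = u) ∧
  (∀ W : X → ℝ≥0∞, (∀ x ∈ C', ENNReal.ofReal (chainFn f w) ≤ W x) →
    ∀ x ∈ C', ∀ N, ENNReal.ofReal (costN f (buildR ρ Δ fuel C' u k w).1
      (buildR ρ Δ fuel C' u k w).2 x N) ≤ EBound f ρ Δ k (W x) x)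

theorem costN_id (f : ℝ → ℝ) (pr : X → ℝ) (x : X) (N : ℕ) :
    costN f (fun y => y) pr x N = 0 := by
  unfold costN
  apply Finset.sum_eq_zero
  intro n _
  have : (fun (y:X) => y)^[n] x = x := by
    rw [show (fun (y:X) => y) = id from rfl, Function.iterate_id, id_eq]
  rw [this, dist_self, zero_mul]

theorem specC_triv {f : ℝ → ℝ} {ρ : X → ℝ} {Δ : ℝ} {fuel : ℕ} {C : Finset X} {u : X}
    {k : ℕ} {w : ℝ} (hw : 0 < w) (hu : u ∈ C) (hcard : C.card ≤ 1) :
    SpecC f ρ Δ fuel C u k w := by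
  have hC : C = {u} := by
    apply Finset.eq_singleton_iff_unique_mem.2
    refine ⟨hu, fun y hy => ?_⟩
    by_contra hne
    have : 2 ≤ C.card := Finset.one_lt_card.2 ⟨y, hy, u, hu, hne⟩
    omega
  rw [SpecC, buildC_triv ρ Δ fuel C u k w hcard]
  subst hC
  refine ⟨fun y _ => ⟨rfl, rfl⟩, ⟨rfl, rfl⟩, ?_, ?_, ?_, ?_, ?_⟩
  · intro y hy; simpa using hy
  · intro y hy hne
    rw [Finset.mem_singleton] at hy
    exact absurd hy hne
  · simp [hw.le]
  · intro y hy
    rw [Finset.mem_singleton] at hy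
    exact ⟨0, hy⟩
  · intro W _ x _ N
    rw [costN_id, ENNReal.ofReal_zero]
    exact zero_le

theorem specR_empty {f : ℝ → ℝ} {ρ : X → ℝ} {Δ : ℝ} {fuel : ℕ} {u : X} {k : ℕ} {w : ℝ}
    (hw : 0 ≤ w) (hρ : IsProbOn ρ) {C' : Finset X} (hC' : C' = ∅) :
    SpecR f ρ Δ fuel C' u k w := by
  subst hC'
  rw [SpecR, buildR_empty ρ Δ fuel ∅ u k w (by simp)]
  refine ⟨fun y _ => ⟨rfl, rfl⟩, ?_, ?_, ?_, ?_, ?_⟩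
  · intro y hy; simp at hy
  · intro y hy; simp at hy
  · intro S _
    simp only [Finset.sum_empty, Finset.card_empty]
    have : (0:ℝ) ≤ ∑ z ∈ S, ρ z := Finset.sum_nonneg fun z _ => hρ.1 z
    positivity
  · intro y hy; simp at hy
  · intro W _ x hx; simp at hx

theorem scale_le {Δ : ℝ} (hΔ : 0 < Δ) {K : ℕ}
    (hK : ∀ x y : X, x ≠ y → 8 * rad Δ K < dist x y) {k : ℕ} {x y : X} (hxy : x ≠ y)
    (hd : dist x y ≤ 4 * rad Δ (k+1)) : k + 1 ≤ K := by
  by_contra h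
  push_neg at h
  have h1 : rad Δ (k+1) ≤ rad Δ K := rad_anti hΔ (by omega)
  have := hK x y hxy
  have h2 : 8 * rad Δ K < 4 * rad Δ (k+1) := lt_of_lt_of_le this hd
  have := rad_pos hΔ K
  nlinarith


theorem ofReal_chainFn_div8 (hf : IsChainingDensity f) {w : ℝ} (hw : 0 < w) (Wx : ℝ≥0∞)
    (hW : ENNReal.ofReal (chainFn f w) ≤ Wx) :
    ENNReal.ofReal (chainFn f (w/8)) ≤ Wx + 3 * ENNReal.ofReal (chainFn f (1/2)) := by
  calc ENNReal.ofReal (chainFn f (w/8))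
      ≤ ENNReal.ofReal (chainFn f w + 3 * chainFn f (1/2)) :=
        ENNReal.ofReal_le_ofReal (chainFn_eighth hf hw)
    _ ≤ ENNReal.ofReal (chainFn f w) + ENNReal.ofReal (3 * chainFn f (1/2)) :=
        ENNReal.ofReal_add_le
    _ = ENNReal.ofReal (chainFn f w) + 3 * ENNReal.ofReal (chainFn f (1/2)) := by
        rw [ENNReal.ofReal_mul (by norm_num : (0:ℝ) ≤ 3)]
        norm_num
    _ ≤ Wx + 3 * ENNReal.ofReal (chainFn f (1/2)) := by gcongr

variable {f : ℝ → ℝ} {ρ : X → ℝ} {Δ : ℝ}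

theorem build_spec (hf : IsChainingDensity f) (hρ : IsProbOn ρ) (hΔ : 0 < Δ) (K : ℕ)
    (hK : ∀ x y : X, x ≠ y → 8 * rad Δ K < dist x y) :
    ∀ fuel : ℕ,
    (∀ (C : Finset X) (u : X) (k : ℕ) (w : ℝ), u ∈ C →
       (∀ y ∈ C, dist u y ≤ 2 * rad Δ k) → 0 < w → w ≤ 1/2 →
       (C.card + (K + 1 - k) ≤ fuel ∨ C.card ≤ 1) →
       SpecC f ρ Δ fuel C u k w)
    ∧ (∀ (C' : Finset X) (u : X) (k : ℕ) (w : ℝ), u ∉ C' →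
       (∀ y ∈ C', dist u y ≤ 2 * rad Δ k) → 0 < w → w ≤ 1/2 →
       (C'.card + (K + 1 - k) ≤ fuel ∨ C' = ∅) →
       SpecR f ρ Δ fuel C' u k w) := by
  intro fuel
  induction fuel with
  | zero =>
      constructor
      · intro C u k w hu _ hw _ hfuel
        have hcard : C.card ≤ 1 := by
          rcases hfuel with h | h
          · have : 1 ≤ C.card := Finset.card_pos.2 ⟨u, hu⟩
            omega
          · exact h
        exact specC_triv hw hu hcard
      · intro C' u k w _ _ hw _ hfuel
        have : C' = ∅ := by
          rcases hfuel with h | h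
          · exact Finset.card_eq_zero.1 (by omega)
          · exact h
        exact specR_empty hw.le hρ this
  | succ fuel ih =>
      obtain ⟨ihC, ihR⟩ := ih
      constructor
      · -- SpecC step
        intro C u k w hu hball hw hw2 hfuel
        by_cases hcard : C.card ≤ 1
        · exact specC_triv hw hu hcard
        have hfuel' : C.card + (K + 1 - k) ≤ fuel + 1 := hfuel.resolve_right hcard
        have heq := buildC_succ ρ Δ fuel C u k w hcard
        set r' : ℝ := rad Δ (k+1) with hr'
        set D1 : Finset X := C.filter (fun y => dist u y ≤ 2 * r') with hD1
        set inner := buildC ρ Δ fuel D1 u (k+1) (w/8) with hinner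
        set rest := buildR ρ Δ fuel (C \ D1) u k w with hrest
        have hP1 : ∀ y, (buildC ρ Δ (fuel+1) C u k w).1 y
            = if y ∈ D1 then inner.1 y else rest.1 y := by intro y; rw [heq]
        have hP2 : ∀ y, (buildC ρ Δ (fuel+1) C u k w).2 y
            = if y ∈ D1 then inner.2 y else rest.2 y := by intro y; rw [heq]
        have hr'pos : 0 < r' := rad_pos hΔ (k+1)
        have hu1 : u ∈ D1 := by
          rw [hD1, Finset.mem_filter]
          exact ⟨hu, by rw [dist_self]; positivity⟩
        have hsub : D1 ⊆ C := by rw [hD1]; exact Finset.filter_subset _ _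
        have hD1ball : ∀ y ∈ D1, dist u y ≤ 2 * rad Δ (k+1) := by
          intro y hy; rw [hD1, Finset.mem_filter] at hy; exact hy.2
        have hw8 : 0 < w / 8 := by linarith
        have hw82 : w / 8 ≤ 1/2 := by linarith
        have hfuelD1 : D1.card + (K + 1 - (k+1)) ≤ fuel ∨ D1.card ≤ 1 := by
          by_cases h1 : D1.card ≤ 1
          · exact Or.inr h1
          left
          by_cases h2 : D1 = C
          · obtain ⟨a, ha, b, hb, hab⟩ := Finset.one_lt_card.1 (not_le.1 h1)
            have hd : dist a b ≤ 4 * rad Δ (k+1) := by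
              calc dist a b ≤ dist a u + dist u b := dist_triangle a u b
                _ = dist u a + dist u b := by rw [dist_comm a u]
                _ ≤ 2 * r' + 2 * r' := add_le_add (hD1ball a ha) (hD1ball b hb)
                _ = 4 * rad Δ (k+1) := by rw [hr']; ring
            have hk1K : k + 1 ≤ K := scale_le hΔ hK hab hd
            have : D1.card = C.card := by rw [h2]
            omega
          · have : D1.card < C.card := Finset.card_lt_card (Finset.ssubset_iff_subset_ne.2 ⟨hsub, h2⟩)
            omega
        have specD1 := ihC D1 u (k+1) (w/8) hu1 hD1ball hw8 hw82 hfuelD1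
        obtain ⟨cA, cA', cB, cP, cS, cD, cE⟩ := specD1
        have husd : u ∉ C \ D1 := by
          rw [Finset.mem_sdiff]; push_neg; intro _; exact hu1
        have hfuelR : (C \ D1).card + (K + 1 - k) ≤ fuel ∨ (C \ D1) = ∅ := by
          left
          have h1 : (C \ D1).card = C.card - D1.card := Finset.card_sdiff_of_subset hsub
          have h2 : 1 ≤ D1.card := Finset.card_pos.2 ⟨u, hu1⟩
          have h3 : D1.card ≤ C.card := Finset.card_le_card hsub
          omega
        have specRest := ihR (C \ D1) u k w husd
          (fun y hy => hball y (Finset.mem_sdiff.1 hy).1) hw hw2 hfuelR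
        obtain ⟨rA, rB, rP, rS, rD, rE⟩ := specRest
        -- agreement on D1
        have agreeD1 : ∀ z ∈ D1, (buildC ρ Δ (fuel+1) C u k w).1 z = inner.1 z := by
          intro z hz; rw [hP1, if_pos hz]
        have agreeD1' : ∀ z ∈ D1, (buildC ρ Δ (fuel+1) C u k w).2 z = inner.2 z := by
          intro z hz; rw [hP2, if_pos hz]
        -- agreement on T := insert u (C \ D1)
        have hparu : (buildC ρ Δ (fuel+1) C u k w).1 u = u := by
          rw [hP1, if_pos hu1]; exact cA'.1
        have hpru : (buildC ρ Δ (fuel+1) C u k w).2 u = 0 := by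
          rw [hP2, if_pos hu1]; exact cA'.2
        have agreeT : ∀ z ∈ insert u (C \ D1),
            (buildC ρ Δ (fuel+1) C u k w).1 z = rest.1 z := by
          intro z hz
          rcases Finset.mem_insert.1 hz with h | hz'
          · rw [h, hparu, (rA u husd).1]
          · rw [hP1, if_neg (Finset.mem_sdiff.1 hz').2]
        have agreeT' : ∀ z ∈ insert u (C \ D1),
            (buildC ρ Δ (fuel+1) C u k w).2 z = rest.2 z := by
          intro z hz
          rcases Finset.mem_insert.1 hz with h | hz'
          · rw [h, hpru, (rA u husd).2]
          · rw [hP2, if_neg (Finset.mem_sdiff.1 hz').2]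
        have mapT : ∀ z ∈ insert u (C \ D1), rest.1 z ∈ insert u (C \ D1) := by
          intro z hz
          rcases Finset.mem_insert.1 hz with h | hz'
          · rw [h, (rA u husd).1]; exact Finset.mem_insert_self _ _
          · exact rB z hz'
        refine ⟨?_, ⟨hparu, hpru⟩, ?_, ?_, ?_, ?_, ?_⟩
        · -- A
          intro y hy
          have h1 : y ∉ D1 := fun h => hy (hsub h)
          have h2 : y ∉ C \ D1 := fun h => hy (Finset.mem_sdiff.1 h).1
          rw [hP1, hP2, if_neg h1, if_neg h1]
          exact ⟨(rA y h2).1, (rA y h2).2⟩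
        · -- B
          intro y hy
          rw [hP1]
          by_cases h1 : y ∈ D1
          · rw [if_pos h1]; exact hsub (cB y h1)
          · rw [if_neg h1]
            have hy' : y ∈ C \ D1 := Finset.mem_sdiff.2 ⟨hy, h1⟩
            rcases Finset.mem_insert.1 (rB y hy') with h | h
            · rw [h]; exact hu
            · exact (Finset.mem_sdiff.1 h).1
        · -- P
          intro y hy hne
          rw [hP2]
          by_cases h1 : y ∈ D1
          · rw [if_pos h1]
            obtain ⟨hp1, hp2⟩ := cP y h1 hne
            exact ⟨hp1, by linarith⟩
          · rw [if_neg h1]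
            exact rP y (Finset.mem_sdiff.2 ⟨hy, h1⟩)
        · -- sum
          have hsplit : (∑ y ∈ C \ D1, (buildC ρ Δ (fuel+1) C u k w).2 y)
              + (∑ y ∈ D1, (buildC ρ Δ (fuel+1) C u k w).2 y)
              = ∑ y ∈ C, (buildC ρ Δ (fuel+1) C u k w).2 y := Finset.sum_sdiff hsub
          rw [← hsplit]
          have e1 : (∑ y ∈ D1, (buildC ρ Δ (fuel+1) C u k w).2 y) = ∑ y ∈ D1, inner.2 y :=
            Finset.sum_congr rfl agreeD1'
          have e2 : (∑ y ∈ C \ D1, (buildC ρ Δ (fuel+1) C u k w).2 y)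
              = ∑ y ∈ C \ D1, rest.2 y :=
            Finset.sum_congr rfl (fun z hz => agreeT' z (Finset.mem_insert_of_mem hz))
          rw [e1, e2]
          have hbound2 : (∑ y ∈ C \ D1, rest.2 y) ≤
              w / 4 * ((∑ z ∈ Finset.univ, ρ z) + ((C \ D1).card : ℝ) / (Fintype.card X : ℝ)) :=
            rS Finset.univ (fun y _ z _ => Finset.mem_univ z)
          have hcardX : 0 < Fintype.card X := Fintype.card_pos_iff.2 ⟨u⟩
          have hfrac : ((C \ D1).card : ℝ) / (Fintype.card X : ℝ) ≤ 1 := by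
            rw [div_le_one (by positivity)]
            exact_mod_cast Finset.card_le_univ _
          rw [hρ.2] at hbound2
          have : (∑ y ∈ C \ D1, rest.2 y) ≤ w / 2 := by nlinarith
          linarith [cS]
        · -- reach
          intro y hy
          by_cases h1 : y ∈ D1
          · obtain ⟨n, hn⟩ := cD y h1
            refine ⟨n, ?_⟩
            rw [iterate_agree _ inner.1 D1 agreeD1 cB h1 n, hn]
          · have hy' : y ∈ C \ D1 := Finset.mem_sdiff.2 ⟨hy, h1⟩
            obtain ⟨n, hn⟩ := rD y hy'
            refine ⟨n, ?_⟩
            rw [iterate_agree _ rest.1 (insert u (C \ D1)) agreeT mapT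
              (Finset.mem_insert_of_mem hy') n]
            rw [iterate_agree rest.1 rest.1 (insert u (C \ D1)) (fun z _ => rfl) mapT
              (Finset.mem_insert_of_mem hy') n] at hn
            exact hn
        · -- cost
          intro W hW x hx N
          by_cases h1 : x ∈ D1
          · have hcongr : costN f (buildC ρ Δ (fuel+1) C u k w).1
                (buildC ρ Δ (fuel+1) C u k w).2 x N = costN f inner.1 inner.2 x N :=
              costN_congr f _ inner.1 _ inner.2 D1 agreeD1 agreeD1' cB h1 N
            rw [hcongr]
            have hW' : ∀ z ∈ D1, ENNReal.ofReal (chainFn f (w/8)) ≤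
                W z + 3 * ENNReal.ofReal (chainFn f (1/2)) :=
              fun z hz => ofReal_chainFn_div8 hf hw (W z) (hW z (hsub hz))
            calc ENNReal.ofReal (costN f inner.1 inner.2 x N)
                ≤ EBound f ρ Δ (k+1) (W x + 3 * ENNReal.ofReal (chainFn f (1/2))) x :=
                  cE (fun z => W z + 3 * ENNReal.ofReal (chainFn f (1/2))) hW' x h1 N
              _ ≤ EBound f ρ Δ k (W x) x := EBound_stepC f ρ hΔ k x (W x)
          · have hx' : x ∈ C \ D1 := Finset.mem_sdiff.2 ⟨hx, h1⟩
            have hcongr : costN f (buildC ρ Δ (fuel+1) C u k w).1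
                (buildC ρ Δ (fuel+1) C u k w).2 x N = costN f rest.1 rest.2 x N :=
              costN_congr f _ rest.1 _ rest.2 (insert u (C \ D1)) agreeT agreeT' mapT
                (Finset.mem_insert_of_mem hx') N
            rw [hcongr]
            exact rE W (fun z hz => hW z (Finset.mem_sdiff.1 hz).1) x hx' N
      · -- SpecR step
        intro C' u k w huC hball hw hw2 hfuel
        by_cases hne : C'.Nonempty
        swap
        · exact specR_empty hw.le hρ (Finset.not_nonempty_iff_eq_empty.1 hne)
        have hfuel' : C'.card + (K + 1 - k) ≤ fuel + 1 :=
          hfuel.resolve_right (Finset.nonempty_iff_ne_empty.1 hne)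
        have heq := buildR_succ ρ Δ fuel C' u k w hne
        set r' : ℝ := rad Δ (k+1) with hr'
        set v : X := amax ρ r' C' hne with hv
        set D : Finset X := pieceD ρ Δ k C' hne with hD
        set q : ℝ := pieceq ρ Δ k C' hne with hq
        set inner := buildC ρ Δ fuel D v (k+1) (w*q) with hinner
        set rest := buildR ρ Δ fuel (C' \ D) u k w with hrest
        have hP1 : ∀ y, (buildR ρ Δ (fuel+1) C' u k w).1 y
            = if y ∈ D then (if y = v then u else inner.1 y) else rest.1 y := by
          intro y; rw [heq]
        have hP2 : ∀ y, (buildR ρ Δ (fuel+1) C' u k w).2 y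
            = if y ∈ D then (if y = v then w * q else inner.2 y) else rest.2 y := by
          intro y; rw [heq]
        have hr'pos : 0 < r' := rad_pos hΔ (k+1)
        have hDdef : D = C'.filter (fun y => dist v y ≤ 2 * r') := rfl
        have hvC : v ∈ C' := amax_mem ρ r' C' hne
        have hvD : v ∈ D := by
          rw [hDdef, Finset.mem_filter]
          exact ⟨hvC, by rw [dist_self]; positivity⟩
        have hsubD : D ⊆ C' := by rw [hDdef]; exact Finset.filter_subset _ _
        have hDball : ∀ y ∈ D, dist v y ≤ 2 * rad Δ (k+1) := by
          intro y hy; rw [hDdef, Finset.mem_filter] at hy; exact hy.2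
        have huD : u ∉ D := fun h => huC (hsubD h)
        have hcardX : 0 < Fintype.card X := Fintype.card_pos_iff.2 ⟨v⟩
        have hm0 : 0 ≤ ballMass ρ v r' := ballMass_nonneg hρ v r'
        have hm1 : ballMass ρ v r' ≤ 1 := ballMass_le_one hρ v r'
        have hc0 : 0 < ((D.card : ℝ)) / (Fintype.card X : ℝ) := by
          apply div_pos _ (by exact_mod_cast hcardX)
          exact_mod_cast Finset.card_pos.2 ⟨v, hvD⟩
        have hc1 : ((D.card : ℝ)) / (Fintype.card X : ℝ) ≤ 1 := by
          rw [div_le_one (by exact_mod_cast hcardX)]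
          exact_mod_cast Finset.card_le_univ _
        have hq8 : q = (ballMass ρ v r' + ((D.card : ℝ)) / (Fintype.card X : ℝ)) / 8 := rfl
        have hq0 : 0 < q := by rw [hq8]; positivity
        have hq14 : q ≤ 1/4 := by rw [hq8]; linarith
        have hwq : 0 < w * q := mul_pos hw hq0
        have hwqw : w * q ≤ w := by nlinarith
        have hwq2 : w * q ≤ 1/2 := hwqw.trans hw2
        have hfuelD : D.card + (K + 1 - (k+1)) ≤ fuel ∨ D.card ≤ 1 := by
          by_cases h1 : D.card ≤ 1
          · exact Or.inr h1
          left
          obtain ⟨a, ha, b, hb, hab⟩ := Finset.one_lt_card.1 (not_le.1 h1)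
          have hd : dist a b ≤ 4 * rad Δ (k+1) := by
            calc dist a b ≤ dist a v + dist v b := dist_triangle a v b
              _ = dist v a + dist v b := by rw [dist_comm a v]
              _ ≤ 2 * r' + 2 * r' := add_le_add (hDball a ha) (hDball b hb)
              _ = 4 * rad Δ (k+1) := by rw [hr']; ring
          have hk1K : k + 1 ≤ K := scale_le hΔ hK hab hd
          have h3 : D.card ≤ C'.card := Finset.card_le_card hsubD
          omega
        have specInner := ihC D v (k+1) (w*q) hvD hDball hwq hwq2 hfuelD
        obtain ⟨cA, cA', cB, cP, cS, cD, cE⟩ := specInner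
        have husd : u ∉ C' \ D := fun h => huC (Finset.mem_sdiff.1 h).1
        have hfuelR : (C' \ D).card + (K + 1 - k) ≤ fuel ∨ (C' \ D) = ∅ := by
          left
          have h1 : (C' \ D).card = C'.card - D.card := Finset.card_sdiff_of_subset hsubD
          have h2 : 1 ≤ D.card := Finset.card_pos.2 ⟨v, hvD⟩
          have h3 : D.card ≤ C'.card := Finset.card_le_card hsubD
          omega
        have specRest := ihR (C' \ D) u k w husd
          (fun y hy => hball y (Finset.mem_sdiff.1 hy).1) hw hw2 hfuelR
        obtain ⟨rA, rB, rP, rS, rD, rE⟩ := specRest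
        -- basic values
        have hparv : (buildR ρ Δ (fuel+1) C' u k w).1 v = u := by
          rw [hP1, if_pos hvD, if_pos rfl]
        have hprv : (buildR ρ Δ (fuel+1) C' u k w).2 v = w * q := by
          rw [hP2, if_pos hvD, if_pos rfl]
        have hparu : (buildR ρ Δ (fuel+1) C' u k w).1 u = u := by
          rw [hP1, if_neg huD]; exact (rA u husd).1
        have hpru : (buildR ρ Δ (fuel+1) C' u k w).2 u = 0 := by
          rw [hP2, if_neg huD]; exact (rA u husd).2
        have hagree : ∀ y ∈ D, y ≠ v → (buildR ρ Δ (fuel+1) C' u k w).1 y = inner.1 y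
            ∧ (buildR ρ Δ (fuel+1) C' u k w).2 y = inner.2 y := by
          intro y hy hvne
          rw [hP1, hP2, if_pos hy, if_pos hy, if_neg hvne, if_neg hvne]
          exact ⟨rfl, rfl⟩
        have agreeT : ∀ z ∈ insert u (C' \ D),
            (buildR ρ Δ (fuel+1) C' u k w).1 z = rest.1 z := by
          intro z hz
          rcases Finset.mem_insert.1 hz with h | hz'
          · rw [h, hparu, (rA u husd).1]
          · rw [hP1, if_neg (Finset.mem_sdiff.1 hz').2]
        have agreeT' : ∀ z ∈ insert u (C' \ D),
            (buildR ρ Δ (fuel+1) C' u k w).2 z = rest.2 z := by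
          intro z hz
          rcases Finset.mem_insert.1 hz with h | hz'
          · rw [h, hpru, (rA u husd).2]
          · rw [hP2, if_neg (Finset.mem_sdiff.1 hz').2]
        have mapT : ∀ z ∈ insert u (C' \ D), rest.1 z ∈ insert u (C' \ D) := by
          intro z hz
          rcases Finset.mem_insert.1 hz with h | hz'
          · rw [h, (rA u husd).1]; exact Finset.mem_insert_self _ _
          · exact rB z hz'
        refine ⟨?_, ?_, ?_, ?_, ?_, ?_⟩
        · -- A
          intro y hy
          have h1 : y ∉ D := fun h => hy (hsubD h)
          have h2 : y ∉ C' \ D := fun h => hy (Finset.mem_sdiff.1 h).1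
          rw [hP1, hP2, if_neg h1, if_neg h1]
          exact ⟨(rA y h2).1, (rA y h2).2⟩
        · -- B
          intro y hy
          rw [hP1]
          by_cases h1 : y ∈ D
          · rw [if_pos h1]
            by_cases h2 : y = v
            · rw [if_pos h2]; exact Finset.mem_insert_self _ _
            · rw [if_neg h2]
              exact Finset.mem_insert_of_mem (hsubD (cB y h1))
          · rw [if_neg h1]
            have hy' : y ∈ C' \ D := Finset.mem_sdiff.2 ⟨hy, h1⟩
            rcases Finset.mem_insert.1 (rB y hy') with h | h
            · rw [h]; exact Finset.mem_insert_self _ _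
            · exact Finset.mem_insert_of_mem (Finset.mem_sdiff.1 h).1
        · -- P
          intro y hy
          rw [hP2]
          by_cases h1 : y ∈ D
          · rw [if_pos h1]
            by_cases h2 : y = v
            · rw [if_pos h2]; exact ⟨hwq, hwqw⟩
            · rw [if_neg h2]
              obtain ⟨hp1, hp2⟩ := cP y h1 h2
              exact ⟨hp1, hp2.trans hwqw⟩
          · rw [if_neg h1]
            exact rP y (Finset.mem_sdiff.2 ⟨hy, h1⟩)
        · -- sum
          intro S hS
          have hsplit : (∑ y ∈ C' \ D, (buildR ρ Δ (fuel+1) C' u k w).2 y)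
              + (∑ y ∈ D, (buildR ρ Δ (fuel+1) C' u k w).2 y)
              = ∑ y ∈ C', (buildR ρ Δ (fuel+1) C' u k w).2 y := Finset.sum_sdiff hsubD
          rw [← hsplit]
          -- the D part
          have eD : (∑ y ∈ D, (buildR ρ Δ (fuel+1) C' u k w).2 y) ≤ 2 * (w * q) := by
            have h1 : (buildR ρ Δ (fuel+1) C' u k w).2 v
                + ∑ y ∈ D.erase v, (buildR ρ Δ (fuel+1) C' u k w).2 y
                = ∑ y ∈ D, (buildR ρ Δ (fuel+1) C' u k w).2 y :=
              Finset.add_sum_erase D _ hvD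
            have h2 : inner.2 v + ∑ y ∈ D.erase v, inner.2 y = ∑ y ∈ D, inner.2 y :=
              Finset.add_sum_erase D _ hvD
            have h3 : (∑ y ∈ D.erase v, (buildR ρ Δ (fuel+1) C' u k w).2 y)
                = ∑ y ∈ D.erase v, inner.2 y := by
              apply Finset.sum_congr rfl
              intro y hy
              obtain ⟨hyv, hyD⟩ := Finset.mem_erase.1 hy
              exact (hagree y hyD hyv).2
            have h4 : inner.2 v = 0 := cA'.2
            rw [← h1, hprv, h3]
            have : (∑ y ∈ D.erase v, inner.2 y) ≤ w * q := by
              rw [h4, zero_add] at h2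
              rw [h2]; exact cS
            linarith
          -- the rest part
          have hS' : ∀ y ∈ C' \ D, ∀ z : X, dist y z ≤ rad Δ (k+1) → z ∈ S \ ballF v r' := by
            intro y hy z hz
            rw [Finset.mem_sdiff]
            constructor
            · exact hS y (Finset.mem_sdiff.1 hy).1 z hz
            · intro hzB
              have hvz : dist v z ≤ r' := by
                have := Finset.mem_filter.1 hzB
                exact this.2
              have hvy : dist v y ≤ 2 * r' := by
                calc dist v y ≤ dist v z + dist z y := dist_triangle v z y
                  _ = dist v z + dist y z := by rw [dist_comm z y]
                  _ ≤ r' + r' := add_le_add hvz hz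
                  _ = 2 * r' := by ring
              have : y ∈ D := by
                rw [hDdef, Finset.mem_filter]
                exact ⟨(Finset.mem_sdiff.1 hy).1, hvy⟩
              exact (Finset.mem_sdiff.1 hy).2 this
          have eR : (∑ y ∈ C' \ D, (buildR ρ Δ (fuel+1) C' u k w).2 y)
              ≤ w / 4 * ((∑ z ∈ S \ ballF v r', ρ z)
                + ((C' \ D).card : ℝ) / (Fintype.card X : ℝ)) := by
            have hcongr : (∑ y ∈ C' \ D, (buildR ρ Δ (fuel+1) C' u k w).2 y)
                = ∑ y ∈ C' \ D, rest.2 y :=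
              Finset.sum_congr rfl (fun z hz => agreeT' z (Finset.mem_insert_of_mem hz))
            rw [hcongr]
            exact rS (S \ ballF v r') hS'
          have hBS : ballF v r' ⊆ S := by
            intro z hz
            exact hS v hvC z (Finset.mem_filter.1 hz).2
          have hmass : (∑ z ∈ S \ ballF v r', ρ z) + ballMass ρ v r' = ∑ z ∈ S, ρ z := by
            rw [ballMass_eq]
            exact Finset.sum_sdiff hBS
          have hcards : ((C' \ D).card : ℝ) = (C'.card : ℝ) - (D.card : ℝ) := by
            rw [Finset.card_sdiff_of_subset hsubD]
            exact_mod_cast Nat.cast_sub (Finset.card_le_card hsubD)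
          have h2wq : 2 * (w * q) = w / 4 * (ballMass ρ v r'
              + ((D.card : ℝ)) / (Fintype.card X : ℝ)) := by
            rw [hq8]; ring
          calc (∑ y ∈ C' \ D, (buildR ρ Δ (fuel+1) C' u k w).2 y)
              + (∑ y ∈ D, (buildR ρ Δ (fuel+1) C' u k w).2 y)
              ≤ w / 4 * ((∑ z ∈ S \ ballF v r', ρ z)
                + ((C' \ D).card : ℝ) / (Fintype.card X : ℝ)) + 2 * (w * q) :=
                add_le_add eR eD
            _ = w / 4 * ((∑ z ∈ S, ρ z) + (C'.card : ℝ) / (Fintype.card X : ℝ)) := by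
                rw [h2wq, hcards, ← hmass]
                field_simp
                ring
        · -- reach
          intro y hy
          by_cases h1 : y ∈ D
          · exact (splice f _ inner.1 _ inner.2 D v u huD hagree cB hparv hparu hpru
              cA'.1 h1 (cD y h1)).1
          · have hy' : y ∈ C' \ D := Finset.mem_sdiff.2 ⟨hy, h1⟩
            obtain ⟨n, hn⟩ := rD y hy'
            refine ⟨n, ?_⟩
            rw [iterate_agree _ rest.1 (insert u (C' \ D)) agreeT mapT
              (Finset.mem_insert_of_mem hy') n]
            exact hn
        · -- cost
          intro W hW x hx N
          by_cases h1 : x ∈ D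
          · have hsplice := splice f _ inner.1 _ inner.2 D v u huD hagree cB hparv hparu hpru
              cA'.1 h1 (cD x h1)
            set n₀ := Nat.find (cD x h1) with hn₀
            have hcost := hsplice.2 N
            rw [hprv] at hcost
            set e : ℝ≥0∞ := chargeE f ρ (ballMass ρ v r') with he
            have hW' : ∀ z ∈ D, ENNReal.ofReal (chainFn f (w * q)) ≤
                W z + 3 * ENNReal.ofReal (chainFn f (1/2)) + e :=
              fun z hz => label_bound hf hρ hw hq8 hm0 hc0 (W z) (hW z (hsubD hz))
            have hinnercost : ENNReal.ofReal (costN f inner.1 inner.2 x n₀) ≤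
                EBound f ρ Δ (k+1) (W x + 3 * ENNReal.ofReal (chainFn f (1/2)) + e) x :=
              cE (fun z => W z + 3 * ENNReal.ofReal (chainFn f (1/2)) + e) hW' x h1 n₀
            have hdvu : dist v u ≤ 4 * rad Δ (k+1) := by
              have h5 := hball v hvC
              have h6 : rad Δ k = 2 * rad Δ (k+1) := by rw [rad_succ]; ring
              calc dist v u = dist u v := dist_comm v u
                _ ≤ 2 * rad Δ k := h5
                _ = 4 * rad Δ (k+1) := by rw [h6]; ring
            have hedge : ENNReal.ofReal (dist v u * chainFn f (w * q)) ≤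
                ENNReal.ofReal (4 * rad Δ (k+1))
                  * (W x + 3 * ENNReal.ofReal (chainFn f (1/2)) + e) := by
              rw [ENNReal.ofReal_mul dist_nonneg]
              exact mul_le_mul' (ENNReal.ofReal_le_ofReal hdvu) (hW' x h1)
            have hcharge : ENNReal.ofReal (rad Δ (k+2)) * e ≤
                ∫⁻ r in Set.Ioc (rad Δ (k+2)) (rad Δ (k+1)), chainFnE f (ballMass ρ x r) :=
              charge_lemma hf hρ hΔ (amax_spec ρ r' C' hne x (hsubD h1))
            calc ENNReal.ofReal (costN f (buildR ρ Δ (fuel+1) C' u k w).1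
                  (buildR ρ Δ (fuel+1) C' u k w).2 x N)
                ≤ ENNReal.ofReal (costN f inner.1 inner.2 x n₀
                    + dist v u * chainFn f (w * q)) := ENNReal.ofReal_le_ofReal hcost
              _ ≤ ENNReal.ofReal (costN f inner.1 inner.2 x n₀)
                  + ENNReal.ofReal (dist v u * chainFn f (w * q)) := ENNReal.ofReal_add_le
              _ ≤ EBound f ρ Δ (k+1) (W x + 3 * ENNReal.ofReal (chainFn f (1/2)) + e) x
                  + ENNReal.ofReal (4 * rad Δ (k+1))
                    * (W x + 3 * ENNReal.ofReal (chainFn f (1/2)) + e) :=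
                  add_le_add hinnercost hedge
              _ ≤ EBound f ρ Δ k (W x) x := EBound_step f ρ hΔ k x (W x) e hcharge
          · have hx' : x ∈ C' \ D := Finset.mem_sdiff.2 ⟨hx, h1⟩
            have hcongr : costN f (buildR ρ Δ (fuel+1) C' u k w).1
                (buildR ρ Δ (fuel+1) C' u k w).2 x N = costN f rest.1 rest.2 x N :=
              costN_congr f _ rest.1 _ rest.2 (insert u (C' \ D)) agreeT agreeT' mapT
                (Finset.mem_insert_of_mem hx') N
            rw [hcongr]
            exact rE W (fun z hz => hW z (Finset.mem_sdiff.1 hz).1) x hx' N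


end Build

section Assemble

open scoped Classical

variable {X : Type*} [MetricSpace X] [Fintype X]


theorem lint_lower_Ioo (f : ℝ → ℝ) (ρ : X → ℝ) {x : X} {a b : ℝ} (c : ℝ≥0∞)
    (hc : ∀ r ∈ Set.Ioo a b, c ≤ chainFnE f (ballMass ρ x r)) :
    c * ENNReal.ofReal (b - a) ≤ ∫⁻ r in Set.Ioo a b, chainFnE f (ballMass ρ x r) := by
  calc c * ENNReal.ofReal (b - a) = c * volume (Set.Ioo a b) := by rw [Real.volume_Ioo]
    _ = ∫⁻ _ in Set.Ioo a b, c := (MeasureTheory.setLIntegral_const _ _).symm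
    _ ≤ _ := MeasureTheory.setLIntegral_mono' measurableSet_Ioo hc

theorem diam_pair [Nontrivial X] :
    ∃ a b : X, dist a b = fdiam X ∧ 0 < fdiam X ∧ ∀ x y : X, dist x y ≤ fdiam X := by
  have hbd : Bornology.IsBounded (Set.univ : Set X) := Set.finite_univ.isBounded
  obtain ⟨p, hp⟩ := Finite.exists_max (fun p : X × X => dist p.1 p.2)
  have hle1 : fdiam X ≤ dist p.1 p.2 := by
    apply Metric.diam_le_of_forall_dist_le dist_nonneg
    intro x _ y _
    exact hp (x, y)
  have hle2 : ∀ x y : X, dist x y ≤ fdiam X := fun x y =>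
    Metric.dist_le_diam_of_mem hbd (Set.mem_univ x) (Set.mem_univ y)
  obtain ⟨x, y, hxy⟩ := exists_pair_ne X
  have hpos : 0 < fdiam X := lt_of_lt_of_le (dist_pos.2 hxy) (hle2 x y)
  exact ⟨p.1, p.2, le_antisymm (hle2 _ _) hle1, hpos, hle2⟩

theorem halfmass {ρ : X → ℝ} (hρ : IsProbOn ρ) [Nontrivial X] :
    ∃ z : X, ∀ r ∈ Set.Ioo (0:ℝ) (fdiam X / 2), ballMass ρ z r ≤ 1/2 := by
  obtain ⟨a, b, hab, hpos, hle⟩ := diam_pair (X := X)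
  by_cases hcase : ∃ r₁ ∈ Set.Ioo (0:ℝ) (fdiam X / 2), 1/2 < ballMass ρ a r₁
  · obtain ⟨r₁, hr₁, hm₁⟩ := hcase
    refine ⟨b, fun r hr => ?_⟩
    set r₂ : ℝ := max r r₁ with hr₂
    have hr₂mem : r₂ ∈ Set.Ioo (0:ℝ) (fdiam X / 2) :=
      ⟨lt_max_of_lt_left hr.1, max_lt hr.2 hr₁.2⟩
    have hdisj : Disjoint (ballF a r₂) (ballF (X := X) b r₂) := by
      rw [Finset.disjoint_left]
      intro y hy₁ hy₂
      have h1 : dist a y ≤ r₂ := (Finset.mem_filter.1 hy₁).2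
      have h2 : dist b y ≤ r₂ := (Finset.mem_filter.1 hy₂).2
      have : dist a b ≤ 2 * r₂ := by
        calc dist a b ≤ dist a y + dist y b := dist_triangle a y b
          _ = dist a y + dist b y := by rw [dist_comm y b]
          _ ≤ r₂ + r₂ := add_le_add h1 h2
          _ = 2 * r₂ := by ring
      rw [hab] at this
      have := hr₂mem.2
      linarith
    have hsum : ballMass ρ a r₂ + ballMass ρ b r₂ ≤ 1 := by
      rw [ballMass_eq, ballMass_eq, ← Finset.sum_union hdisj, ← hρ.2]
      exact Finset.sum_le_sum_of_subset_of_nonneg (Finset.subset_univ _) (fun y _ _ => hρ.1 y)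
    have h3 : ballMass ρ a r₁ ≤ ballMass ρ a r₂ := ballMass_mono hρ a (le_max_right r r₁)
    have h4 : ballMass ρ b r ≤ ballMass ρ b r₂ := ballMass_mono hρ b (le_max_left r r₁)
    linarith
  · push_neg at hcase
    exact ⟨a, hcase⟩

theorem diam_term {f : ℝ → ℝ} {ρ : X → ℝ} (hρ : IsProbOn ρ) [Nontrivial X] :
    ENNReal.ofReal (fdiam X * chainFn f (1/2)) ≤ 4 * ⨆ x : X, Hint f ρ x := by
  obtain ⟨z, hz⟩ := halfmass hρ
  have hpos : 0 < fdiam X := (diam_pair (X := X)).choose_spec.choose_spec.2.1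
  have hlow : ∀ r ∈ Set.Ioo (0:ℝ) (fdiam X / 2),
      ENNReal.ofReal (chainFn f (1/2)) ≤ chainFnE f (ballMass ρ z r) := by
    intro r hr
    exact le_trans (chainFnE_ge f (1/2)) (chainFnE_anti f (hz r hr))
  have h1 := lint_lower_Ioo f ρ (ENNReal.ofReal (chainFn f (1/2))) hlow
  rw [sub_zero] at h1
  have h2 : (∫⁻ r in Set.Ioo (0:ℝ) (fdiam X / 2), chainFnE f (ballMass ρ z r)) ≤ Hint f ρ z :=
    lint_Ioo_le_Hint f ρ z _
  have h3 : Hint f ρ z ≤ ⨆ x : X, Hint f ρ x := le_iSup _ z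
  have key : ENNReal.ofReal (chainFn f (1/2)) * ENNReal.ofReal (fdiam X / 2)
      ≤ ⨆ x : X, Hint f ρ x := le_trans h1 (le_trans h2 h3)
  have hsplit : ENNReal.ofReal (fdiam X * chainFn f (1/2))
      = 2 * (ENNReal.ofReal (chainFn f (1/2)) * ENNReal.ofReal (fdiam X / 2)) := by
    rw [← ENNReal.ofReal_mul (chainFn_nonneg f _),
      show (2:ℝ≥0∞) = ENNReal.ofReal (2:ℝ) by simp,
      ← ENNReal.ofReal_mul (by norm_num)]
    congr 1
    ring
  rw [hsplit]
  calc 2 * (ENNReal.ofReal (chainFn f (1/2)) * ENNReal.ofReal (fdiam X / 2))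
      ≤ 2 * ⨆ x : X, Hint f ρ x := by gcongr
    _ ≤ 4 * ⨆ x : X, Hint f ρ x :=
        mul_le_mul_left (by norm_num : (2:ℝ≥0∞) ≤ 4) _

theorem exists_K [Nontrivial X] {Δ : ℝ} (hΔ : 0 < Δ) :
    ∃ K : ℕ, ∀ x y : X, x ≠ y → 8 * rad Δ K < dist x y := by
  have hne : (Finset.univ.offDiag (α := X)).Nonempty := by
    obtain ⟨x, y, hxy⟩ := exists_pair_ne X
    exact ⟨(x, y), Finset.mem_offDiag.2 ⟨Finset.mem_univ x, Finset.mem_univ y, hxy⟩⟩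
  set S : Finset ℝ := Finset.univ.offDiag.image (fun p : X × X => dist p.1 p.2) with hS
  have hSne : S.Nonempty := hne.image _
  set δ : ℝ := S.min' hSne with hδ
  have hδpos : 0 < δ := by
    obtain ⟨p, hp, hpd⟩ := Finset.mem_image.1 (S.min'_mem hSne)
    have hne' : p.1 ≠ p.2 := (Finset.mem_offDiag.1 hp).2.2
    calc (0:ℝ) < dist p.1 p.2 := dist_pos.2 hne'
      _ = δ := hpd
  have hδle : ∀ x y : X, x ≠ y → δ ≤ dist x y := by
    intro x y hxy
    apply S.min'_le
    exact Finset.mem_image.2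
      ⟨(x, y), Finset.mem_offDiag.2 ⟨Finset.mem_univ x, Finset.mem_univ y, hxy⟩, rfl⟩
  obtain ⟨K, hK⟩ := exists_pow_lt_of_lt_one (show (0:ℝ) < δ / (8 * Δ) by positivity)
    (show (2⁻¹ : ℝ) < 1 by norm_num)
  refine ⟨K, fun x y hxy => ?_⟩
  have h1 : 8 * rad Δ K < δ := by
    unfold rad
    have h2 : (2⁻¹:ℝ)^K * (8 * Δ) < δ / (8 * Δ) * (8 * Δ) := by
      apply mul_lt_mul_of_pos_right hK
      positivity
    rw [div_mul_cancel₀] at h2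
    · nlinarith
    · positivity
  exact lt_of_lt_of_le h1 (hδle x y hxy)

end Assemble

theorem edgeLabelSum_le {X : Type*} [Fintype X] (root : X) (prob : X → ℝ)
    (h0 : prob root = 0) (c : ℝ) (h : (∑ y, prob y) ≤ c) : edgeLabelSum root prob ≤ c := by
  unfold edgeLabelSum
  letI := Classical.decEq X
  have hkey : prob root + ∑ y ∈ Finset.univ.erase root, prob y = ∑ y, prob y :=
    Finset.add_sum_erase Finset.univ prob (Finset.mem_univ root)
  rw [h0, zero_add] at hkey
  rw [hkey]
  exact h

theorem EBound_final {X : Type*} [MetricSpace X] [Fintype X] (f : ℝ → ℝ) (ρ : X → ℝ)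
    {Δ : ℝ} (hΔ : 0 < Δ) (hf : IsChainingDensity f) (x : X) :
    EBound f ρ Δ 0 (ENNReal.ofReal (chainFn f (1/2))) x
      ≤ 28 * ENNReal.ofReal (Δ * chainFn f (1/2)) + 16 * Hint f ρ x := by
  have hrad0 : rad Δ 0 = Δ := by unfold rad; simp
  have hrad1 : rad Δ 1 = Δ / 2 := by rw [rad_succ, hrad0]
  have hh : 0 ≤ chainFn f (1/2) := chainFn_nonneg f _
  have half : ENNReal.ofReal (Δ/2 * chainFn f (1/2)) * 2
      = ENNReal.ofReal (Δ * chainFn f (1/2)) := by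
    rw [show ((2:ℝ≥0∞)) = ENNReal.ofReal (2:ℝ) by simp,
      ← ENNReal.ofReal_mul (by positivity : (0:ℝ) ≤ Δ/2 * chainFn f (1/2))]
    congr 1
    ring
  have h1 : (8 : ℝ≥0∞) * ENNReal.ofReal (rad Δ 1) * ENNReal.ofReal (chainFn f (1/2))
      = 4 * ENNReal.ofReal (Δ * chainFn f (1/2)) := by
    rw [mul_assoc, ← ENNReal.ofReal_mul (rad_nonneg hΔ 1), hrad1, ← half]
    ring
  have h2 : (48 : ℝ≥0∞) * ENNReal.ofReal (rad Δ 1 * chainFn f (1/2))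
      = 24 * ENNReal.ofReal (Δ * chainFn f (1/2)) := by
    rw [hrad1, ← half]
    ring
  unfold EBound
  rw [show (0:ℕ)+1 = 1 from rfl, h1, h2]
  have h3 : (∫⁻ r in Set.Ioc 0 (rad Δ 1), chainFnE f (ballMass ρ x r)) ≤ Hint f ρ x :=
    lint_Ioc_le_Hint f ρ x _
  calc 4 * ENNReal.ofReal (Δ * chainFn f (1/2)) + 24 * ENNReal.ofReal (Δ * chainFn f (1/2))
        + 16 * ∫⁻ r in Set.Ioc 0 (rad Δ 1), chainFnE f (ballMass ρ x r)
      ≤ 4 * ENNReal.ofReal (Δ * chainFn f (1/2)) + 24 * ENNReal.ofReal (Δ * chainFn f (1/2))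
        + 16 * Hint f ρ x := by gcongr
    _ = 28 * ENNReal.ofReal (Δ * chainFn f (1/2)) + 16 * Hint f ρ x := by ring


end CT

/-- there is a universal constant `c > 0` such that for every finite
metric space `X` with at least two points, every chaining functional `h` of
log-concave type and every probability measure `ρ` on `X`, there is a chaining
tree `C` for `X` with `val_h(C) ≤ c·max_{x∈X} ∫₀^∞ h(ρ(B(x,r))) dr`. -/
theorem stmt12 :
    ∃ c : ℝ, 0 < c ∧
      ∀ (X : Type) [MetricSpace X] [Fintype X] [Nontrivial X],
      ∀ (f : ℝ → ℝ), IsChainingDensity f →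
      ∀ (ρ : X → ℝ), IsProbOn ρ →
      ∃ C : ChainingTree X,
        ENNReal.ofReal (ctVal f C) ≤ ENNReal.ofReal c * (⨆ x : X, Hint f ρ x) := by
  classical
  refine ⟨200, by norm_num, ?_⟩
  intro X _ _ _ f hf ρ hρ
  obtain ⟨a, b, hab, hΔpos, hle⟩ := CT.diam_pair (X := X)
  set Δ : ℝ := fdiam X with hΔdef
  obtain ⟨K, hK⟩ := CT.exists_K (X := X) hΔpos
  set fuelTop : ℕ := Fintype.card X + (K + 1) with hfuelTop
  set u₀ : X := Classical.arbitrary X with hu₀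
  have hball : ∀ y ∈ (Finset.univ : Finset X), dist u₀ y ≤ 2 * CT.rad Δ 0 := by
    intro y _
    have : CT.rad Δ 0 = Δ := by unfold CT.rad; simp
    rw [this]
    have := hle u₀ y
    linarith
  have hspec := (CT.build_spec hf hρ hΔpos K hK fuelTop).1 Finset.univ u₀ 0 (1/2)
    (Finset.mem_univ u₀) hball (by norm_num) le_rfl
    (Or.inl (by simp only [Finset.card_univ, Nat.sub_zero, hfuelTop]; omega))
  obtain ⟨cA, cA', cB, cP, cS, cD, cE⟩ := hspec
  set par : X → X := (CT.buildC ρ Δ fuelTop Finset.univ u₀ 0 (1/2)).1 with hpar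
  set pr : X → ℝ := (CT.buildC ρ Δ fuelTop Finset.univ u₀ 0 (1/2)).2 with hpr
  have hmem : ∀ x : X, x ≠ u₀ → pr x ∈ Set.Ioc (0:ℝ) (1/2) := by
    intro x hx
    obtain ⟨h1, h2⟩ := cP x (Finset.mem_univ x) hx
    exact ⟨h1, h2⟩
  have hsum : edgeLabelSum u₀ pr ≤ 1/2 := CT.edgeLabelSum_le u₀ pr cA'.2 _ cS
  set T : ChainingTree X :=
    (⟨u₀, par, pr, cA'.1, fun x => cD x (Finset.mem_univ x), hmem, hsum⟩ : ChainingTree X)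
    with hT
  refine ⟨T, ?_⟩
  have hpath : ∀ x : X, pathLen f T x = CT.costN f par pr x (Fintype.card X) := fun x => rfl
  have hM : ∀ x : X, ENNReal.ofReal (pathLen f T x) ≤
      ENNReal.ofReal 200 * (⨆ x : X, Hint f ρ x) := by
    intro x
    rw [hpath x]
    have hEB := cE (fun _ => ENNReal.ofReal (chainFn f (1/2))) (fun z _ => le_rfl) x
      (Finset.mem_univ x) (Fintype.card X)
    have hfin := CT.EBound_final f ρ hΔpos hf x
    have hdiam := CT.diam_term (f := f) hρ (X := X)
    have hHx : Hint f ρ x ≤ ⨆ x : X, Hint f ρ x := le_iSup _ x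
    calc ENNReal.ofReal (CT.costN f par pr x (Fintype.card X))
        ≤ CT.EBound f ρ Δ 0 (ENNReal.ofReal (chainFn f (1/2))) x := hEB
      _ ≤ 28 * ENNReal.ofReal (Δ * chainFn f (1/2)) + 16 * Hint f ρ x := hfin
      _ ≤ 28 * (4 * ⨆ x : X, Hint f ρ x) + 16 * (⨆ x : X, Hint f ρ x) := by gcongr
      _ = 128 * ⨆ x : X, Hint f ρ x := by ring
      _ ≤ ENNReal.ofReal 200 * (⨆ x : X, Hint f ρ x) := by
          apply mul_le_mul_left
          rw [ENNReal.ofReal_ofNat]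
          norm_num
  obtain ⟨x₀, hx₀⟩ := Finite.exists_max (pathLen f T)
  have hct : ctVal f T ≤ pathLen f T x₀ := ciSup_le hx₀
  exact le_trans (ENNReal.ofReal_le_ofReal hct) (hM x₀)
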